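/- arXiv:2111.07618 — 8 statements merged into one kernel-verified Lean document; each statement's English description precedes it below -/
import Mathlib

section
/- Let g : ℝⁿ → ℝ be differentiable with L-Lipschitz gradient, h₁ : ℝⁿ → ℝ ∪ {+∞} a proper lower semicontinuous convex function, h₂ : ℝⁿ → ℝ a continuous convex function, and f = g + h₁ − h₂. Suppose sequences {x_k}, {x_k⁺}, {ξ_k}, {r_k}, {B_k}, {η_k} satisfy, for every k: h₁(x_k) and h₁(x_k⁺) are finite; ξ_k ∈ ∂h₂(x_k); B_k is a symmetric matrix with m‖u‖² ≤ uᵀB_k u ≤ M‖u‖² for all u (with constants 0 < m ≤ M); d_k = x_k⁺ − x_k; r_k − (∇g(x_k) − ξ_k) − B_k d_k ∈ ∂h₁(x_k⁺); ‖r_k‖_{B_k⁻¹} ≤ (1 − θ_k)‖d_k‖_{B_k} with θ_k ∈ [θ̄, 1] for a constant θ̄ ∈ (0,1]; x_{k+1} = x_k + η_k d_k with η_k ∈ [η̄, 1] for a constant η̄ > 0; and the line-search condition f(x_{k+1}) ≤ f(x_k) + δ η_k ((∇g(x_k) − ξ_k)ᵀ d_k + h₁(x_k⁺) − h₁(x_k))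 holds with a constant δ ∈ (0,1). If f is bounded below, then ‖d_k‖ → 0 as k → ∞. -/
open Matrix Filter Topology RealInnerProductSpace

noncomputable section

/-- `n`-dimensional Euclidean space. -/
abbrev Euc (n : ℕ) := EuclideanSpace ℝ (Fin n)

/-- `v` is a subgradient of the extended-real-valued convex function `φ` at `x`. -/
def ESubgradAt {n : ℕ} (φ : Euc n → EReal) (v x : Euc n) : Prop :=
  ∀ y : Euc n, φ x + ((⟪v, y - x⟫ : ℝ) : EReal) ≤ φ y

/-- `v` is a subgradient of the real-valued convex function `φ` at `x`. -/
def RSubgradAt {n : ℕ} (φ : Euc n → ℝ) (v x : Euc n) : Prop :=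
  ∀ y : Euc n, φ x + ⟪v, y - x⟫ ≤ φ y

/-- Convexity of an extended-real-valued function. -/
def EConvexF {n : ℕ} (φ : Euc n → EReal) : Prop :=
  ∀ x y : Euc n, ∀ a b : ℝ, 0 ≤ a → 0 ≤ b → a + b = 1 →
    φ (a • x + b • y) ≤ (a : EReal) * φ x + (b : EReal) * φ y

/-- Properness of an extended-real-valued function: never `⊥` and finite somewhere. -/
def ProperF {n : ℕ} (φ : Euc n → EReal) : Prop :=
  (∀ x, φ x ≠ ⊥) ∧ (∃ x, φ x ≠ ⊤)

/-- The quadratic form `uᵀ B u`. -/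
def quadF {n : ℕ} (B : Matrix (Fin n) (Fin n) ℝ) (u : Euc n) : ℝ :=
  ⟪u, (Matrix.toEuclideanLin B) u⟫

/-- The scaled norm `‖u‖_B = √(uᵀ B u)`. -/
def MNorm {n : ℕ} (B : Matrix (Fin n) (Fin n) ℝ) (u : Euc n) : ℝ :=
  Real.sqrt (quadF B u)

/-- The objective `f = g + h₁ - h₂`. -/
def fObj {n : ℕ} (g : Euc n → ℝ) (h₁ : Euc n → EReal) (h₂ : Euc n → ℝ) (x : Euc n) : EReal :=
  (g x : EReal) + h₁ x - (h₂ x : EReal)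

lemma csLem {n : ℕ} (T : Euc n →ₗ[ℝ] Euc n) (hT : T.IsSymmetric)
    (hpos : ∀ u, 0 ≤ ⟪u, T u⟫) (s d : Euc n) :
    ⟪s, T d⟫ ^ 2 ≤ ⟪s, T s⟫ * ⟪d, T d⟫ := by
  have key : ∀ t : ℝ, 0 ≤ ⟪d, T d⟫ * (t * t) + (2 * ⟪s, T d⟫) * t + ⟪s, T s⟫ := by
    intro t
    have h1 := hpos (s + t • d)
    have h2 : ⟪T d, s⟫ = ⟪d, T s⟫ := hT d s
    have h4 : ⟪d, T s⟫ = ⟪s, T d⟫ := by rw [← h2, real_inner_comm]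
    simp only [map_add, LinearMap.map_smul, inner_add_left, inner_add_right, inner_smul_left,
      inner_smul_right, RCLike.conj_to_real, h4] at h1
    nlinarith [h1]
  have := discrim_le_zero key
  rw [discrim] at this
  nlinarith [this]

/-- global convergence `‖d_k‖ → 0` of the inexact proximal DC Newton-type
method when `f = g + h₁ - h₂` is bounded below. -/
theorem inexact_proximal_DC_Newton_dk_tendsto_zero
    {n : ℕ} (L m M δ θbar ηbar : ℝ)
    (g : Euc n → ℝ) (g' : Euc n → Euc n)
    (h₁ : Euc n → EReal) (h₂ : Euc n → ℝ)
    (x xp ξ r d : ℕ → Euc n) (B : ℕ → Matrix (Fin n) (Fin n) ℝ)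
    (θ η : ℕ → ℝ)
    (hL : 0 ≤ L)
    (hg : ∀ y : Euc n, HasGradientAt g (g' y) y)
    (hLip : ∀ u v : Euc n, ‖g' u - g' v‖ ≤ L * ‖u - v‖)
    (hprop : ProperF h₁) (hlsc : LowerSemicontinuous h₁) (hconv : EConvexF h₁)
    (hh₂cont : Continuous h₂) (hh₂conv : ConvexOn ℝ Set.univ h₂)
    (hm : 0 < m) (hmM : m ≤ M)
    (hθbar : 0 < θbar) (hθbar1 : θbar ≤ 1)
    (hδ0 : 0 < δ) (hδ1 : δ < 1) (hηbar : 0 < ηbar)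
    (hfin : ∀ k, h₁ (x k) ≠ ⊤) (hfinp : ∀ k, h₁ (xp k) ≠ ⊤)
    (hξ : ∀ k, RSubgradAt h₂ (ξ k) (x k))
    (hBsymm : ∀ k, (B k).IsSymm)
    (hBbound : ∀ k, ∀ u : Euc n,
      m * ‖u‖ ^ 2 ≤ quadF (B k) u ∧ quadF (B k) u ≤ M * ‖u‖ ^ 2)
    (hd : ∀ k, d k = xp k - x k)
    (hr : ∀ k, ESubgradAt h₁
      (r k - (g' (x k) - ξ k) - (Matrix.toEuclideanLin (B k)) (d k)) (xp k))
    (hres : ∀ k, MNorm (B k)⁻¹ (r k) ≤ (1 - θ k) * MNorm (B k) (d k))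
    (hθ : ∀ k, θbar ≤ θ k ∧ θ k ≤ 1)
    (hη : ∀ k, ηbar ≤ η k ∧ η k ≤ 1)
    (hstep : ∀ k, x (k + 1) = x k + η k • d k)
    (hls : ∀ k, fObj g h₁ h₂ (x (k + 1)) ≤ fObj g h₁ h₂ (x k) +
      ((δ * η k * (⟪g' (x k) - ξ k, d k⟫ + (h₁ (xp k)).toReal - (h₁ (x k)).toReal) : ℝ) : EReal))
    (hbdd : ∃ c : ℝ, ∀ y : Euc n, (c : EReal) ≤ fObj g h₁ h₂ y) :
    Tendsto (fun k => ‖d k‖) atTop (𝓝 0) := by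
  have hsymmT : ∀ k, (Matrix.toEuclideanLin (B k)).IsSymmetric := fun k =>
    (Matrix.isHermitian_iff_isSymmetric).mp (hBsymm k)
  have hqnn : ∀ k (u : Euc n), 0 ≤ quadF (B k) u := fun k u =>
    le_trans (mul_nonneg hm.le (by positivity)) (hBbound k u).1
  have hPD : ∀ k, (B k).PosDef := by
    intro k
    refine Matrix.PosDef.of_dotProduct_mulVec_pos (hBsymm k) fun v hv => ?_
    set u : Euc n := (WithLp.equiv 2 (Fin n → ℝ)).symm v with hu
    have hquad : quadF (B k) u = star v ⬝ᵥ B k *ᵥ v := by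
      simp [quadF, Matrix.toEuclideanLin_apply, PiLp.inner_apply, dotProduct, mul_comm, hu]
    have hun : u ≠ 0 := by
      simpa [hu] using hv
    have : 0 < m * ‖u‖ ^ 2 := by
      have : 0 < ‖u‖ := norm_pos_iff.mpr hun
      positivity
    rw [← hquad]
    exact lt_of_lt_of_le this (hBbound k u).1
  have hTinv : ∀ k (v : Euc n),
      Matrix.toEuclideanLin (B k) (Matrix.toEuclideanLin (B k)⁻¹ v) = v := by
    intro k v
    simp [Matrix.toEuclideanLin_apply, Matrix.mulVec_mulVec,
      Matrix.mul_nonsing_inv _ ((Matrix.isUnit_iff_isUnit_det _).mp (hPD k).isUnit),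
      Matrix.one_mulVec]
  -- key per-step decrease of the model
  have hDelta : ∀ k, ⟪g' (x k) - ξ k, d k⟫ + (h₁ (xp k)).toReal - (h₁ (x k)).toReal
      ≤ -(θbar * m) * ‖d k‖ ^ 2 := by
    intro k
    set T := Matrix.toEuclideanLin (B k) with hTdef
    set ζ : Euc n := r k - (g' (x k) - ξ k) - T (d k) with hζdef
    set a := (h₁ (x k)).toReal with hadef
    set b := (h₁ (xp k)).toReal with hbdef
    have ha : ((a : ℝ) : EReal) = h₁ (x k) := EReal.coe_toReal (hfin k) (hprop.1 _)
    have hb : ((b : ℝ) : EReal) = h₁ (xp k) := EReal.coe_toReal (hfinp k) (hprop.1 _)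
    have hsub := hr k (x k)
    rw [← ha, ← hb, ← EReal.coe_add, EReal.coe_le_coe_iff] at hsub
    have hxk : x k - xp k = -(d k) := by rw [hd k]; abel
    rw [hxk, inner_neg_right] at hsub
    have key1 : b - a ≤ ⟪ζ, d k⟫ := by linarith
    have hζd : ⟪ζ, d k⟫ = ⟪r k, d k⟫ - ⟪g' (x k) - ξ k, d k⟫ - quadF (B k) (d k) := by
      rw [hζdef, inner_sub_left, inner_sub_left]
      have : (⟪T (d k), d k⟫ : ℝ) = quadF (B k) (d k) := real_inner_comm _ _
      rw [this]
    -- Cauchy-Schwarz step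
    set s : Euc n := Matrix.toEuclideanLin (B k)⁻¹ (r k) with hsdef
    have hs : T s = r k := hTinv k (r k)
    have key3 : ⟪r k, d k⟫ ≤ MNorm (B k)⁻¹ (r k) * MNorm (B k) (d k) := by
      have h5 : (⟪r k, d k⟫ : ℝ) = ⟪s, T (d k)⟫ := by rw [← hs]; exact hsymmT k s (d k)
      have hcs := csLem T (hsymmT k) (fun u => hqnn k u) s (d k)
      have h6 : (⟪s, T s⟫ : ℝ) = quadF (B k)⁻¹ (r k) := by
        rw [hs]
        have : quadF (B k)⁻¹ (r k) = ⟪r k, s⟫ := rfl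
        rw [this, real_inner_comm]
      have hnn : 0 ≤ quadF (B k)⁻¹ (r k) := by rw [← h6]; exact hqnn k s
      calc (⟪r k, d k⟫ : ℝ) ≤ |⟪s, T (d k)⟫| := h5 ▸ le_abs_self _
        _ = Real.sqrt (⟪s, T (d k)⟫ ^ 2) := (Real.sqrt_sq_eq_abs _).symm
        _ ≤ Real.sqrt (quadF (B k)⁻¹ (r k) * quadF (B k) (d k)) := by
            apply Real.sqrt_le_sqrt; rw [← h6]; exact hcs
        _ = MNorm (B k)⁻¹ (r k) * MNorm (B k) (d k) := by
            rw [MNorm, MNorm, ← Real.sqrt_mul hnn]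
    have key4 : MNorm (B k)⁻¹ (r k) * MNorm (B k) (d k) ≤ (1 - θ k) * quadF (B k) (d k) := by
      have h7 := hres k
      have h8 : 0 ≤ MNorm (B k) (d k) := Real.sqrt_nonneg _
      have h9 : MNorm (B k) (d k) * MNorm (B k) (d k) = quadF (B k) (d k) :=
        Real.mul_self_sqrt (hqnn k _)
      calc MNorm (B k)⁻¹ (r k) * MNorm (B k) (d k)
          ≤ (1 - θ k) * MNorm (B k) (d k) * MNorm (B k) (d k) :=
            mul_le_mul_of_nonneg_right h7 h8
        _ = (1 - θ k) * quadF (B k) (d k) := by rw [mul_assoc, h9]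
    have hq1 := (hBbound k (d k)).1
    have hq0 := hqnn k (d k)
    have hθ1 := (hθ k).1
    have hθ2 := (hθ k).2
    nlinarith [key1, hζd, key3, key4, mul_le_mul_of_nonneg_left hq1 hθbar.le,
      mul_le_mul_of_nonneg_right hθ1 hq0]
  -- real-valued objective along the iterates
  set F : ℕ → ℝ := fun k => g (x k) + (h₁ (x k)).toReal - h₂ (x k) with hFdef
  have hF : ∀ k, fObj g h₁ h₂ (x k) = ((F k : ℝ) : EReal) := by
    intro k
    rw [hFdef]
    simp only
    rw [fObj, ← EReal.coe_toReal (hfin k) (hprop.1 (x k))]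
    push_cast
    rfl
  have hlsR : ∀ k, F (k + 1) ≤ F k +
      δ * η k * (⟪g' (x k) - ξ k, d k⟫ + (h₁ (xp k)).toReal - (h₁ (x k)).toReal) := by
    intro k
    have hk := hls k
    rw [hF, hF, ← EReal.coe_add, EReal.coe_le_coe_iff] at hk
    exact hk
  obtain ⟨c, hc⟩ := hbdd
  have hcF : ∀ k, c ≤ F k := by
    intro k
    have := hc (x k)
    rw [hF k] at this
    exact_mod_cast this
  have hApos : 0 < δ * ηbar * (θbar * m) := by positivity
  have hdec : ∀ k, F (k + 1) + (δ * ηbar * (θbar * m)) * ‖d k‖ ^ 2 ≤ F k := by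
    intro k
    have h1 := hlsR k
    have h2 := hDelta k
    have h3 := (hη k).1
    have h4 := (hη k).2
    set D := ⟪g' (x k) - ξ k, d k⟫ + (h₁ (xp k)).toReal - (h₁ (x k)).toReal with hD
    have hD0 : D ≤ 0 := le_trans h2 (by
      nlinarith [mul_nonneg (mul_pos hθbar hm).le (sq_nonneg ‖d k‖)])
    have e1 : η k * D ≤ ηbar * D := mul_le_mul_of_nonpos_right h3 hD0
    have e2 : δ * (η k * D) ≤ δ * (ηbar * D) := mul_le_mul_of_nonneg_left e1 hδ0.le
    have e3 : δ * ηbar * D ≤ δ * ηbar * (-(θbar * m) * ‖d k‖ ^ 2) :=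
      mul_le_mul_of_nonneg_left h2 (by positivity)
    nlinarith [h1, e2, e3]
  have hsum : ∀ N, F N + (δ * ηbar * (θbar * m)) * ∑ i ∈ Finset.range N, ‖d i‖ ^ 2 ≤ F 0 := by
    intro N
    induction N with
    | zero => simp
    | succ N ih =>
      rw [Finset.sum_range_succ, mul_add]
      have := hdec N
      linarith
  have hsummable : Summable (fun k => ‖d k‖ ^ 2) := by
    apply summable_of_sum_range_le (c := (F 0 - c) / (δ * ηbar * (θbar * m))) (fun k => sq_nonneg _)
    intro N
    have h1 := hsum N
    have h2 := hcF N
    rw [le_div_iff₀ hApos]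
    nlinarith
  have h0 : Tendsto (fun k => ‖d k‖ ^ 2) atTop (𝓝 0) := hsummable.tendsto_atTop_zero
  have := (Real.continuous_sqrt.tendsto' 0 0 (by simp)).comp h0
  have heq : ((fun t => Real.sqrt t) ∘ fun k => ‖d k‖ ^ 2) = fun k => ‖d k‖ :=
    funext fun k => Real.sqrt_sq (norm_nonneg _)
  rwa [heq] at this
end
end

section
/- Let g : ℝⁿ → ℝ be differentiable with L-Lipschitz gradient, h₁ : ℝⁿ → ℝ ∪ {+∞} a proper lower semicontinuous convex function, h₂ : ℝⁿ → ℝ a continuous convex function, and f = g + h₁ − h₂. Suppose sequences {x_k}, {x_k⁺}, {ξ_k}, {r_k}, {B_k}, {η_k} satisfy, for every k: h₁(x_k) and h₁(x_k⁺) are finite; ξ_k ∈ ∂h₂(x_k); B_k is a symmetric matrix with m‖u‖² ≤ uᵀB_k u ≤ M‖u‖² for all u (with constants 0 < m ≤ M); d_k = x_k⁺ − x_k; r_k − (∇g(x_k) − ξ_k) − B_k d_k ∈ ∂h₁(x_k⁺); ‖r_k‖_{B_k⁻¹} ≤ (1 − θ_k)‖d_k‖_{B_k} with θ_k ∈ [θ̄,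 1] for a constant θ̄ ∈ (0,1]; x_{k+1} = x_k + η_k d_k with η_k ∈ [η̄, 1] for a constant η̄ > 0; and f(x_{k+1}) ≤ f(x_k) + δ η_k ((∇g(x_k) − ξ_k)ᵀ d_k + h₁(x_k⁺) − h₁(x_k)) with δ ∈ (0,1). If f is bounded below and {x_k} is bounded, then every accumulation point x̄ of {x_k} is a critical point of f, i.e., there exist v ∈ ∂h₁(x̄) and w ∈ ∂h₂(x̄) such that ∇g(x̄) + v − w = 0. -/
open Matrix Filter Topology RealInnerProductSpace

noncomputable section

section helpers
variable {n : ℕ}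


lemma symm_inner {B : Matrix (Fin n) (Fin n) ℝ} (hB : B.IsSymm) (u v : Euc n) :
    ⟪(toEuclideanLin B) u, v⟫ = ⟪u, (toEuclideanLin B) v⟫ := by
  have h : B.IsHermitian := by
    rw [Matrix.IsHermitian, Matrix.conjTranspose_eq_transpose_of_trivial]; exact hB
  exact (Matrix.isHermitian_iff_isSymmetric.1 h) u v

lemma quad_expand {B : Matrix (Fin n) (Fin n) ℝ} (hB : B.IsSymm) (u v : Euc n) (t : ℝ) :
    quadF B (u + t • v) = quadF B u + 2 * t * ⟪u, (toEuclideanLin B) v⟫ + t^2 * quadF B v := by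
  have h1 : (toEuclideanLin B) (u + t • v)
      = toEuclideanLin B u + t • toEuclideanLin B v := by
    rw [map_add, LinearMap.map_smul]
  have h2 : ⟪v, (toEuclideanLin B) u⟫ = ⟪u, (toEuclideanLin B) v⟫ := by
    rw [← symm_inner hB, real_inner_comm]
  simp only [quadF, h1, inner_add_left, inner_add_right, real_inner_smul_left,
    real_inner_smul_right]
  linear_combination t * h2

lemma cs_quad {B : Matrix (Fin n) (Fin n) ℝ} (hB : B.IsSymm)
    (hpos : ∀ u : Euc n, 0 ≤ quadF B u) (u v : Euc n) :
    ⟪u, (toEuclideanLin B) v⟫ ^ 2 ≤ quadF B u * quadF B v := by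
  have key : ∀ p q s : ℝ, 0 ≤ p → 0 ≤ q → (∀ t : ℝ, 0 ≤ p + 2*t*s + t^2*q) → s^2 ≤ p*q := by
    intro p q s hp hq hall
    rcases hq.eq_or_lt with hq0 | hq0
    · have hs : s = 0 := by
        by_contra hs
        have h1 := hall (-(p+1)/(2*s))
        have h2 : 2 * (-(p+1)/(2*s)) * s = -(p+1) := by field_simp
        rw [h2, ← hq0] at h1
        nlinarith
      rw [hs, ← hq0]; simp
    · have h1 := hall (-s/q)
      have h2 : p + 2 * (-s/q) * s + (-s/q)^2 * q = p - s^2/q := by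
        field_simp; ring
      rw [h2, sub_nonneg, div_le_iff₀ hq0] at h1
      exact h1
  refine key _ _ _ (hpos u) (hpos v) (fun t => ?_)
  have := hpos (u + t • v)
  rwa [quad_expand hB] at this

lemma pd_facts {B : Matrix (Fin n) (Fin n) ℝ} {m M : ℝ} (hm : 0 < m) (hmM : m ≤ M)
    (hB : B.IsSymm)
    (hlow : ∀ u : Euc n, m * ‖u‖^2 ≤ quadF B u) (hup : ∀ u : Euc n, quadF B u ≤ M * ‖u‖^2) :
    (∀ u : Euc n, ‖toEuclideanLin B u‖ ≤ M * ‖u‖) ∧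
    (∀ r : Euc n, m/M^2 * ‖r‖^2 ≤ quadF (B⁻¹) r) ∧
    (∀ r d : Euc n, ⟪r, d⟫ ≤ MNorm (B⁻¹) r * MNorm B d) := by
  have hM : 0 < M := lt_of_lt_of_le hm hmM
  have hpos : ∀ u : Euc n, 0 ≤ quadF B u := fun u =>
    le_trans (by positivity) (hlow u)
  -- operator norm bound
  have hop : ∀ u : Euc n, ‖toEuclideanLin B u‖ ≤ M * ‖u‖ := by
    intro u
    rcases eq_or_ne (toEuclideanLin B u) 0 with h0 | h0
    · rw [h0]; simp; positivity
    · have hcs := cs_quad hB hpos (toEuclideanLin B u) u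
      have h1 : ⟪toEuclideanLin B u, toEuclideanLin B u⟫ = ‖toEuclideanLin B u‖^2 :=
        real_inner_self_eq_norm_sq _
      rw [h1] at hcs
      have h2 : quadF B (toEuclideanLin B u) ≤ M * ‖toEuclideanLin B u‖^2 := hup _
      have h3 : quadF B u ≤ M * ‖u‖^2 := hup u
      have hn : (0:ℝ) < ‖toEuclideanLin B u‖ := norm_pos_iff.mpr h0
      have k0 : quadF B (toEuclideanLin B u) * quadF B u ≤ (M * ‖toEuclideanLin B u‖^2) * (M * ‖u‖^2) :=
        mul_le_mul h2 h3 (hpos u) (by positivity)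
      have k1 : ‖toEuclideanLin B u‖^2 ≤ (M * ‖u‖)^2 := by nlinarith [norm_nonneg u]
      calc ‖toEuclideanLin B u‖ = Real.sqrt (‖toEuclideanLin B u‖^2) := (Real.sqrt_sq hn.le).symm
        _ ≤ Real.sqrt ((M * ‖u‖)^2) := Real.sqrt_le_sqrt k1
        _ = M * ‖u‖ := Real.sqrt_sq (by positivity)
  -- invertibility
  have hdet : IsUnit B.det := by
    rw [isUnit_iff_ne_zero]
    intro h
    obtain ⟨v, hv0, hv⟩ := (Matrix.exists_mulVec_eq_zero_iff).2 h
    set u : Euc n := (WithLp.equiv 2 (Fin n → ℝ)).symm v with hu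
    have hBu : toEuclideanLin B u = 0 := by
      rw [Matrix.toEuclideanLin_apply, hu]; change WithLp.toLp 2 (B *ᵥ v) = 0; rw [hv]; rfl
    have hq : quadF B u = 0 := by rw [quadF, hBu, inner_zero_right]
    have hu0 : u ≠ 0 := by
      simp only [hu, ne_eq]
      intro h'
      exact hv0 (by simpa using congrArg (WithLp.equiv 2 (Fin n → ℝ)) h')
    have hupos : (0:ℝ) < ‖u‖ := norm_pos_iff.mpr hu0
    have h5 := hlow u
    rw [hq] at h5
    have h6 : (0:ℝ) < m * ‖u‖ ^ 2 := by positivity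
    linarith
  have hBBinv : ∀ r : Euc n, toEuclideanLin B (toEuclideanLin (B⁻¹) r) = r := by
    intro r
    rw [Matrix.toEuclideanLin_apply, Matrix.toEuclideanLin_apply, WithLp.ofLp_toLp,
      Matrix.mulVec_mulVec, Matrix.mul_nonsing_inv _ hdet, Matrix.one_mulVec]
  -- quadF of inverse as quadF B of preimage
  have hqinv : ∀ r : Euc n, quadF (B⁻¹) r = quadF B (toEuclideanLin (B⁻¹) r) := by
    intro r
    rw [quadF, quadF, hBBinv r]
    rw [real_inner_comm]
  refine ⟨hop, fun r => ?_, fun r d => ?_⟩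
  · rw [hqinv r]
    have h1 := hlow (toEuclideanLin (B⁻¹) r)
    have h2 : ‖r‖ ≤ M * ‖toEuclideanLin (B⁻¹) r‖ := by
      have := hop (toEuclideanLin (B⁻¹) r)
      rwa [hBBinv r] at this
    have h3 : ‖r‖^2 ≤ M^2 * ‖toEuclideanLin (B⁻¹) r‖^2 := by nlinarith [norm_nonneg r]
    calc m/M^2 * ‖r‖^2 ≤ m/M^2 * (M^2 * ‖toEuclideanLin (B⁻¹) r‖^2) := by
          apply mul_le_mul_of_nonneg_left h3; positivity
      _ = m * ‖toEuclideanLin (B⁻¹) r‖^2 := by field_simp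
      _ ≤ quadF B (toEuclideanLin (B⁻¹) r) := h1
  · -- Cauchy-Schwarz inequality
    have hri : ⟪r, d⟫ = ⟪toEuclideanLin (B⁻¹) r, toEuclideanLin B d⟫ := by
      conv_lhs => rw [← hBBinv r]
      rw [symm_inner hB]
    have hcs := cs_quad hB hpos (toEuclideanLin (B⁻¹) r) d
    rw [← hqinv r] at hcs
    have h0 : 0 ≤ quadF (B⁻¹) r := by rw [hqinv]; exact hpos _
    have h1 : ⟪r, d⟫ ≤ |⟪toEuclideanLin (B⁻¹) r, toEuclideanLin B d⟫| := by
      rw [hri]; exact le_abs_self _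
    calc ⟪r, d⟫ ≤ |⟪toEuclideanLin (B⁻¹) r, toEuclideanLin B d⟫| := h1
      _ ≤ Real.sqrt (quadF (B⁻¹) r * quadF B d) := by
          rw [← Real.sqrt_sq_eq_abs]
          exact Real.sqrt_le_sqrt hcs
      _ = MNorm (B⁻¹) r * MNorm B d := Real.sqrt_mul h0 _

end helpers

set_option maxHeartbeats 1000000 in
/-- every accumulation point of the sequence generated by the inexact
proximal DC Newton-type method is a critical point of `f = g + h₁ - h₂`. -/
theorem inexact_proximal_DC_Newton_accumulation_critical
    {n : ℕ} (L m M δ θbar ηbar : ℝ)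
    (g : Euc n → ℝ) (g' : Euc n → Euc n)
    (h₁ : Euc n → EReal) (h₂ : Euc n → ℝ)
    (x xp ξ r d : ℕ → Euc n) (B : ℕ → Matrix (Fin n) (Fin n) ℝ)
    (θ η : ℕ → ℝ)
    (hL : 0 ≤ L)
    (hg : ∀ y : Euc n, HasGradientAt g (g' y) y)
    (hLip : ∀ u v : Euc n, ‖g' u - g' v‖ ≤ L * ‖u - v‖)
    (hprop : ProperF h₁) (hlsc : LowerSemicontinuous h₁) (hconv : EConvexF h₁)
    (hh₂cont : Continuous h₂) (hh₂conv : ConvexOn ℝ Set.univ h₂)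
    (hm : 0 < m) (hmM : m ≤ M)
    (hθbar : 0 < θbar) (hθbar1 : θbar ≤ 1)
    (hδ0 : 0 < δ) (hδ1 : δ < 1) (hηbar : 0 < ηbar)
    (hfin : ∀ k, h₁ (x k) ≠ ⊤) (hfinp : ∀ k, h₁ (xp k) ≠ ⊤)
    (hξ : ∀ k, RSubgradAt h₂ (ξ k) (x k))
    (hBsymm : ∀ k, (B k).IsSymm)
    (hBbound : ∀ k, ∀ u : Euc n,
      m * ‖u‖ ^ 2 ≤ quadF (B k) u ∧ quadF (B k) u ≤ M * ‖u‖ ^ 2)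
    (hd : ∀ k, d k = xp k - x k)
    (hr : ∀ k, ESubgradAt h₁
      (r k - (g' (x k) - ξ k) - (Matrix.toEuclideanLin (B k)) (d k)) (xp k))
    (hres : ∀ k, MNorm (B k)⁻¹ (r k) ≤ (1 - θ k) * MNorm (B k) (d k))
    (hθ : ∀ k, θbar ≤ θ k ∧ θ k ≤ 1)
    (hη : ∀ k, ηbar ≤ η k ∧ η k ≤ 1)
    (hstep : ∀ k, x (k + 1) = x k + η k • d k)
    (hls : ∀ k, fObj g h₁ h₂ (x (k + 1)) ≤ fObj g h₁ h₂ (x k) +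
      ((δ * η k * (⟪g' (x k) - ξ k, d k⟫ + (h₁ (xp k)).toReal - (h₁ (x k)).toReal) : ℝ) : EReal))
    (hbdd : ∃ c : ℝ, ∀ y : Euc n, (c : EReal) ≤ fObj g h₁ h₂ y)
    (hxbdd : ∃ R : ℝ, ∀ k, ‖x k‖ ≤ R) :
    ∀ xbar : Euc n,
      (∃ φ : ℕ → ℕ, StrictMono φ ∧ Tendsto (fun i => x (φ i)) atTop (𝓝 xbar)) →
      ∃ v w : Euc n, ESubgradAt h₁ v xbar ∧ RSubgradAt h₂ w xbar ∧
        g' xbar + v - w = 0 := by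
  have hM : 0 < M := lt_of_lt_of_le hm hmM
  -- matrix facts for each k
  have hfacts := fun k => pd_facts (n := n) hm hmM (hBsymm k)
      (fun u => (hBbound k u).1) (fun u => (hBbound k u).2)
  have hqpos : ∀ k, ∀ u : Euc n, 0 ≤ quadF (B k) u := fun k u =>
    le_trans (by positivity) ((hBbound k u).1)
  -- finiteness of h₁ values
  have hne_bot := hprop.1
  -- real h₁ values along the sequences
  set a : ℕ → ℝ := fun k => (h₁ (xp k)).toReal with ha
  set b : ℕ → ℝ := fun k => (h₁ (x k)).toReal with hb
  have hxpval : ∀ k, h₁ (xp k) = ((a k : ℝ) : EReal) := fun k =>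
    (EReal.coe_toReal (hfinp k) (hne_bot _)).symm
  have hxval : ∀ k, h₁ (x k) = ((b k : ℝ) : EReal) := fun k =>
    (EReal.coe_toReal (hfin k) (hne_bot _)).symm
  -- STEP 1 : the descent quantity A k
  set A : ℕ → ℝ := fun k => ⟪g' (x k) - ξ k, d k⟫ + a k - b k with hA
  have key1 : ∀ k, A k ≤ -(θbar * m) * ‖d k‖^2 := by
    intro k
    -- subgradient inequality at y = x k
    have h1 := hr k (x k)
    have hxk : x k - xp k = -(d k) := by rw [hd k]; abel
    rw [hxpval k, hxval k, hxk] at h1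
    rw [← EReal.coe_add, EReal.coe_le_coe_iff] at h1
    -- h1 : a k + ⟪v_k, -(d k)⟫ ≤ b k
    have hinner : ⟪r k - (g' (x k) - ξ k) - (toEuclideanLin (B k)) (d k), -(d k)⟫
        = -⟪r k, d k⟫ + ⟪g' (x k) - ξ k, d k⟫ + quadF (B k) (d k) := by
      rw [quadF]
      simp only [inner_sub_left, inner_neg_right]
      rw [real_inner_comm (d k) ((toEuclideanLin (B k)) (d k))]
      ring
    rw [hinner] at h1
    -- Cauchy-Schwarz and residual bound
    have h2 : ⟪r k, d k⟫ ≤ (1 - θ k) * quadF (B k) (d k) := by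
      have hcs := (hfacts k).2.2 (r k) (d k)
      have hMn : (0:ℝ) ≤ MNorm (B k) (d k) := Real.sqrt_nonneg _
      have hθk := hθ k
      have h3 : MNorm (B k)⁻¹ (r k) * MNorm (B k) (d k)
          ≤ ((1 - θ k) * MNorm (B k) (d k)) * MNorm (B k) (d k) :=
        mul_le_mul_of_nonneg_right (hres k) hMn
      have h4 : MNorm (B k) (d k) * MNorm (B k) (d k) = quadF (B k) (d k) :=
        Real.mul_self_sqrt (hqpos k _)
      calc ⟪r k, d k⟫ ≤ MNorm (B k)⁻¹ (r k) * MNorm (B k) (d k) := hcs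
        _ ≤ (1 - θ k) * (MNorm (B k) (d k) * MNorm (B k) (d k)) := by linarith [h3]
        _ = (1 - θ k) * quadF (B k) (d k) := by rw [h4]
    have hθk := hθ k
    have hlow := (hBbound k (d k)).1
    have hdd : (0:ℝ) ≤ ‖d k‖^2 := by positivity
    -- A k = ⟪g'-ξ,d⟫ + a - b ≤ ⟪r,d⟫ - quad ≤ -θ_k quad ≤ -θbar m ‖d‖²
    have h5 : A k ≤ ⟪r k, d k⟫ - quadF (B k) (d k) := by
      simp only [hA]; linarith
    have h6 : ⟪r k, d k⟫ - quadF (B k) (d k) ≤ -(θ k) * quadF (B k) (d k) := by linarith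
    have h7 : -(θ k) * quadF (B k) (d k) ≤ -(θbar) * quadF (B k) (d k) := by
      have := hqpos k (d k)
      nlinarith
    have h8 : -(θbar) * quadF (B k) (d k) ≤ -(θbar * m) * ‖d k‖^2 := by nlinarith
    linarith
  -- STEP 2 : real-valued objective decrease
  set F : ℕ → ℝ := fun k => g (x k) + b k - h₂ (x k) with hF
  have hFval : ∀ k, fObj g h₁ h₂ (x k) = ((F k : ℝ) : EReal) := by
    intro k
    rw [fObj, hxval k, hF]
    push_cast
    rfl
  obtain ⟨c₀, hc₀⟩ := hbdd
  have hFlow : ∀ k, c₀ ≤ F k := by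
    intro k
    have := hc₀ (x k)
    rw [hFval k, EReal.coe_le_coe_iff] at this
    exact this
  set c : ℝ := δ * ηbar * (θbar * m) with hc
  have hcpos : 0 < c := by positivity
  have hdesc : ∀ k, F (k+1) + c * ‖d k‖^2 ≤ F k := by
    intro k
    have h1 := hls k
    rw [hFval, hFval, ← EReal.coe_add, EReal.coe_le_coe_iff] at h1
    have h1' : F (k+1) ≤ F k + δ * η k * A k := h1
    have hAk := key1 k
    have hηk := hη k
    have hdd : (0:ℝ) ≤ ‖d k‖^2 := by positivity
    have hAneg : A k ≤ 0 := le_trans hAk (by nlinarith [mul_nonneg (mul_pos hθbar hm).le hdd])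
    have h2 : δ * η k * A k ≤ δ * ηbar * A k := by
      nlinarith [mul_nonneg (mul_nonneg hδ0.le (sub_nonneg.mpr hηk.1)) (neg_nonneg.mpr hAneg)]
    have h3 : δ * ηbar * A k ≤ δ * ηbar * (-(θbar * m) * ‖d k‖^2) :=
      mul_le_mul_of_nonneg_left hAk (by positivity)
    have h4 : δ * ηbar * (-(θbar * m) * ‖d k‖^2) = -(c * ‖d k‖^2) := by rw [hc]; ring
    linarith
  have hsum : ∀ N, c * (∑ i ∈ Finset.range N, ‖d i‖^2) + F N ≤ F 0 := by
    intro N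
    induction N with
    | zero => simp
    | succ N ih =>
        rw [Finset.sum_range_succ]
        have := hdesc N
        linarith
  have hsummable : Summable (fun k => ‖d k‖^2) := by
    apply summable_of_sum_range_le (c := (F 0 - c₀)/c) (fun k => by positivity)
    intro N
    have h1 := hsum N
    have h2 := hFlow N
    rw [le_div_iff₀ hcpos]
    nlinarith
  have hd2 : Tendsto (fun k => ‖d k‖^2) atTop (𝓝 0) := hsummable.tendsto_atTop_zero
  have hdnorm : Tendsto (fun k => ‖d k‖) atTop (𝓝 0) := by
    have h1 : Tendsto (fun k => Real.sqrt (‖d k‖^2)) atTop (𝓝 (Real.sqrt 0)) :=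
      (Real.continuous_sqrt.tendsto 0).comp hd2
    rw [Real.sqrt_zero] at h1
    convert h1 using 2 with k
    rw [Real.sqrt_sq (norm_nonneg _)]
  have hd0 : Tendsto d atTop (𝓝 0) := tendsto_zero_iff_norm_tendsto_zero.mpr hdnorm
  -- STEP 3 : accumulation points are critical
  rintro xbar ⟨φ, hφ, hxφ⟩
  obtain ⟨R, hR⟩ := hxbdd
  -- bound on the subgradients ξ k
  obtain ⟨C₁, hC₁⟩ := (isCompact_closedBall (0 : Euc n) (R+1)).exists_bound_of_continuousOn
    hh₂cont.continuousOn
  have hξbdd : ∀ k, ‖ξ k‖ ≤ 2 * C₁ := by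
    intro k
    have hxmem : x k ∈ Metric.closedBall (0:Euc n) (R+1) := by
      rw [Metric.mem_closedBall, dist_zero_right]; linarith [hR k]
    have hC₁0 : (0:ℝ) ≤ C₁ := le_trans (norm_nonneg _) (hC₁ _ hxmem)
    rcases eq_or_ne (ξ k) 0 with h0 | h0
    · rw [h0, norm_zero]; linarith
    · have hnz : ‖ξ k‖ ≠ 0 := norm_ne_zero_iff.mpr h0
      set y := x k + ‖ξ k‖⁻¹ • ξ k with hy
      have hymem : y ∈ Metric.closedBall (0:Euc n) (R+1) := by
        rw [Metric.mem_closedBall, dist_zero_right]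
        calc ‖y‖ ≤ ‖x k‖ + ‖‖ξ k‖⁻¹ • ξ k‖ := norm_add_le _ _
          _ ≤ R + 1 := by
            rw [norm_smul, norm_inv, norm_norm, inv_mul_cancel₀ hnz]
            exact add_le_add (hR k) le_rfl
      have hsub := hξ k y
      have hyx : y - x k = ‖ξ k‖⁻¹ • ξ k := by rw [hy]; abel
      rw [hyx, real_inner_smul_right, real_inner_self_eq_norm_sq] at hsub
      have hid : ‖ξ k‖⁻¹ * ‖ξ k‖^2 = ‖ξ k‖ := by
        rw [sq]; field_simp
      rw [hid] at hsub
      have hb1 := hC₁ _ hxmem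
      have hb2 := hC₁ _ hymem
      rw [Real.norm_eq_abs, abs_le] at hb1 hb2
      linarith [hb1.1, hb2.2]
  -- extract a convergent subsequence of ξ ∘ φ
  obtain ⟨w, -, ψ, hψ, hξw⟩ := tendsto_subseq_of_bounded
    (Metric.isBounded_closedBall (x := (0:Euc n)) (r := 2*C₁))
    (x := fun i => ξ (φ i))
    (fun i => by rw [Metric.mem_closedBall, dist_zero_right]; exact hξbdd _)
  set σ : ℕ → ℕ := φ ∘ ψ with hσ
  have hσmono : StrictMono σ := hφ.comp hψ
  have hxσ : Tendsto (fun i => x (σ i)) atTop (𝓝 xbar) := hxφ.comp hψ.tendsto_atTop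
  have hξσ : Tendsto (fun i => ξ (σ i)) atTop (𝓝 w) := hξw
  have hdσ : Tendsto (fun i => d (σ i)) atTop (𝓝 0) := hd0.comp hσmono.tendsto_atTop
  have hd2σ : Tendsto (fun i => ‖d (σ i)‖^2) atTop (𝓝 0) := hd2.comp hσmono.tendsto_atTop
  have hdnσ : Tendsto (fun i => ‖d (σ i)‖) atTop (𝓝 0) := hdnorm.comp hσmono.tendsto_atTop
  have hxpσ : Tendsto (fun i => xp (σ i)) atTop (𝓝 xbar) := by
    have heq : (fun i => xp (σ i)) = fun i => x (σ i) + d (σ i) := by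
      funext i; rw [hd (σ i)]; abel
    rw [heq]
    simpa using hxσ.add hdσ
  have hg'σ : Tendsto (fun i => g' (x (σ i))) atTop (𝓝 (g' xbar)) := by
    have h1 : Tendsto (fun i => g' (x (σ i)) - g' xbar) atTop (𝓝 0) := by
      apply tendsto_zero_iff_norm_tendsto_zero.mpr
      apply squeeze_zero (fun i => norm_nonneg _) (fun i => hLip (x (σ i)) xbar)
      have h2 : Tendsto (fun i => x (σ i) - xbar) atTop (𝓝 0) := by
        simpa using hxσ.sub (tendsto_const_nhds (x := xbar))
      simpa using (tendsto_zero_iff_norm_tendsto_zero.mp h2).const_mul L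
    simpa using h1.add (tendsto_const_nhds (x := g' xbar))
  -- residual bound : ‖r k‖² ≤ (M²/m) · M · ‖d k‖²
  have hrb : ∀ k, ‖r k‖^2 ≤ M^2/m * (M * ‖d k‖^2) := by
    intro k
    have h1 := (hfacts k).2.1 (r k)
    have hq0 : 0 ≤ quadF (B k)⁻¹ (r k) := le_trans (by positivity) h1
    have h2 : (MNorm (B k)⁻¹ (r k))^2 = quadF (B k)⁻¹ (r k) := Real.sq_sqrt hq0
    have hθk := hθ k
    have hMn : 0 ≤ MNorm (B k) (d k) := Real.sqrt_nonneg _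
    have hMninv : 0 ≤ MNorm (B k)⁻¹ (r k) := Real.sqrt_nonneg _
    have h3 : MNorm (B k)⁻¹ (r k) ≤ MNorm (B k) (d k) :=
      (hres k).trans (mul_le_of_le_one_left hMn (by linarith [hθk.1]))
    have h5 : (MNorm (B k) (d k))^2 = quadF (B k) (d k) := Real.sq_sqrt (hqpos k _)
    have h6 := (hBbound k (d k)).2
    have hkey : m / M^2 * ‖r k‖^2 ≤ M * ‖d k‖^2 := by
      calc m / M^2 * ‖r k‖^2 ≤ quadF (B k)⁻¹ (r k) := h1
        _ = (MNorm (B k)⁻¹ (r k))^2 := h2.symm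
        _ ≤ (MNorm (B k) (d k))^2 := pow_le_pow_left₀ hMninv h3 2
        _ = quadF (B k) (d k) := h5
        _ ≤ M * ‖d k‖^2 := h6
    calc ‖r k‖^2 = M^2/m * (m/M^2 * ‖r k‖^2) := by field_simp
      _ ≤ M^2/m * (M * ‖d k‖^2) := mul_le_mul_of_nonneg_left hkey (by positivity)
  have hrσ : Tendsto (fun i => r (σ i)) atTop (𝓝 0) := by
    apply tendsto_zero_iff_norm_tendsto_zero.mpr
    have h1 : Tendsto (fun i => ‖r (σ i)‖^2) atTop (𝓝 0) := by
      apply squeeze_zero (fun i => by positivity) (fun i => hrb (σ i))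
      simpa using (hd2σ.const_mul M).const_mul (M^2/m)
    have h2 : Tendsto (fun i => Real.sqrt (‖r (σ i)‖^2)) atTop (𝓝 (Real.sqrt 0)) :=
      (Real.continuous_sqrt.tendsto 0).comp h1
    rw [Real.sqrt_zero] at h2
    convert h2 using 2 with i
    rw [Real.sqrt_sq (norm_nonneg _)]
  have hBdσ : Tendsto (fun i => (toEuclideanLin (B (σ i))) (d (σ i))) atTop (𝓝 0) := by
    apply tendsto_zero_iff_norm_tendsto_zero.mpr
    apply squeeze_zero (fun i => norm_nonneg _) (fun i => (hfacts (σ i)).1 (d (σ i)))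
    simpa using hdnσ.const_mul M
  -- the h₁-subgradients converge to w - g' xbar
  have hvσ : Tendsto (fun i => r (σ i) - (g' (x (σ i)) - ξ (σ i))
      - (toEuclideanLin (B (σ i))) (d (σ i))) atTop (𝓝 (w - g' xbar)) := by
    have h1 := (hrσ.sub (hg'σ.sub hξσ)).sub hBdσ
    rw [zero_sub, sub_zero, neg_sub] at h1
    exact h1
  -- w is a subgradient of h₂ at xbar
  have hwsub : RSubgradAt h₂ w xbar := by
    intro y
    have hT : Tendsto (fun i => h₂ (x (σ i)) + ⟪ξ (σ i), y - x (σ i)⟫) atTop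
        (𝓝 (h₂ xbar + ⟪w, y - xbar⟫)) :=
      ((hh₂cont.tendsto xbar).comp hxσ).add
        (hξσ.inner ((tendsto_const_nhds (x := y)).sub hxσ))
    exact le_of_tendsto hT (Eventually.of_forall (fun i => hξ (σ i) y))
  -- w - g' xbar is a subgradient of h₁ at xbar
  have hvsub : ESubgradAt h₁ (w - g' xbar) xbar := by
    intro y
    rcases eq_or_ne (h₁ y) ⊤ with hy | hy
    · rw [hy]; exact le_top
    have hyv : h₁ y = (((h₁ y).toReal : ℝ) : EReal) := (EReal.coe_toReal hy (hne_bot y)).symm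
    set cy : ℝ := (h₁ y).toReal
    set t : ℝ := ⟪w - g' xbar, y - xbar⟫ with ht
    set ti : ℕ → ℝ := fun i => ⟪r (σ i) - (g' (x (σ i)) - ξ (σ i))
      - (toEuclideanLin (B (σ i))) (d (σ i)), y - xp (σ i)⟫ with hti
    have htt : Tendsto ti atTop (𝓝 t) :=
      hvσ.inner ((tendsto_const_nhds (x := y)).sub hxpσ)
    have hsi : ∀ i, a (σ i) + ti i ≤ cy := by
      intro i
      have h := hr (σ i) y
      rw [hxpval (σ i), hyv, ← EReal.coe_add, EReal.coe_le_coe_iff] at h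
      exact h
    rw [hyv]
    have hmain : h₁ xbar ≤ ((cy - t : ℝ) : EReal) := by
      by_contra hcon
      push_neg at hcon
      obtain ⟨z, hz1, hz2⟩ := exists_between hcon
      have hzt : z ≠ ⊤ := ne_top_of_lt hz2
      have hzb : z ≠ ⊥ := ne_bot_of_gt hz1
      have hzv : z = ((z.toReal : ℝ) : EReal) := (EReal.coe_toReal hzt hzb).symm
      have hev1 : ∀ᶠ i in atTop, z < h₁ (xp (σ i)) := hxpσ.eventually (hlsc xbar z hz2)
      have hzr : cy - t < z.toReal := by
        rw [hzv, EReal.coe_lt_coe_iff] at hz1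
        exact hz1
      have hev2 : ∀ᶠ i in atTop, cy - ti i < z.toReal :=
        Tendsto.eventually_lt_const hzr ((tendsto_const_nhds (x := cy)).sub htt)
      obtain ⟨i, h1i, h2i⟩ := (hev1.and hev2).exists
      rw [hxpval (σ i), hzv, EReal.coe_lt_coe_iff] at h1i
      have h3i := hsi i
      linarith
    calc h₁ xbar + ((t:ℝ):EReal) ≤ ((cy - t:ℝ):EReal) + ((t:ℝ):EReal) :=
          add_le_add_left hmain _
      _ = ((cy:ℝ):EReal) := by rw [← EReal.coe_add]; norm_num
  refine ⟨w - g' xbar, w, hvsub, hwsub, ?_⟩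
  abel
end
end

section
/- Let g : ℝⁿ → ℝ be differentiable with L-Lipschitz gradient, h₁ : ℝⁿ → ℝ ∪ {+∞} a proper lower semicontinuous convex function, h₂ : ℝⁿ → ℝ a continuous convex function, f = g + h₁ − h₂. Let x, x⁺ ∈ ℝⁿ with h₁(x) and h₁(x⁺) finite, d = x⁺ − x, ξ ∈ ∂h₂(x), B a symmetric matrix with m‖u‖² ≤ uᵀBu for all u (m > 0), θ̄ ∈ (0,1], and suppose r ∈ ℝⁿ satisfies r − (∇g(x) − ξ) − B d ∈ ∂h₁(x⁺) and ‖r‖_{B⁻¹} ≤ (1 − θ̄)‖d‖_B. If f is directionally differentiable at x and x is a directional stationary point, i.e., the one-sided directional derivative f′(x; p) = lim_{η→0⁺} (f(x + ηp) − f(x))/η is nonnegative for every direction p ∈ ℝⁿ, then d = 0. -/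
open Matrix Filter Topology RealInnerProductSpace

noncomputable section

set_option maxHeartbeats 1000000

/-- if `x` is a directional stationary point of `f = g + h₁ - h₂`
(and `f` is directionally differentiable at `x`), then the inexact proximal DC Newton
direction `d = x⁺ - x` vanishes. -/
theorem directional_stationary_implies_d_eq_zero
    {n : ℕ} (L m θbar : ℝ)
    (g : Euc n → ℝ) (g' : Euc n → Euc n)
    (h₁ : Euc n → EReal) (h₂ : Euc n → ℝ)
    (x xp ξ r d : Euc n) (B : Matrix (Fin n) (Fin n) ℝ)
    (hL : 0 ≤ L)
    (hg : ∀ y : Euc n, HasGradientAt g (g' y) y)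
    (hLip : ∀ u v : Euc n, ‖g' u - g' v‖ ≤ L * ‖u - v‖)
    (hprop : ProperF h₁) (hlsc : LowerSemicontinuous h₁) (hconv : EConvexF h₁)
    (hh₂cont : Continuous h₂) (hh₂conv : ConvexOn ℝ Set.univ h₂)
    (hfin : h₁ x ≠ ⊤) (hfinp : h₁ xp ≠ ⊤)
    (hd : d = xp - x)
    (hξ : RSubgradAt h₂ ξ x)
    (hBsymm : B.IsSymm)
    (hm : 0 < m)
    (hBlow : ∀ u : Euc n, m * ‖u‖ ^ 2 ≤ quadF B u)
    (hθbar0 : 0 < θbar) (hθbar1 : θbar ≤ 1)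
    (hr : ESubgradAt h₁ (r - (g' x - ξ) - (Matrix.toEuclideanLin B) d) xp)
    (hres : MNorm B⁻¹ r ≤ (1 - θbar) * MNorm B d)
    -- `f` is directionally differentiable at `x` and `x` is a directional stationary
    -- point: for every direction `p`, the one-sided directional derivative
    -- `f′(x; p) = lim_{η→0⁺} (f(x + ηp) - f(x))/η` exists and is nonnegative.
    (hdir : ∀ p : Euc n, ∃ c : EReal, 0 ≤ c ∧
      Tendsto (fun t : ℝ => ((t⁻¹ : ℝ) : EReal) * (fObj g h₁ h₂ (x + t • p) - fObj g h₁ h₂ x))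
        (𝓝[>] (0 : ℝ)) (𝓝 c)) :
    d = 0 := by
  classical
  by_contra hdne
  have hdn : 0 < ‖d‖ := norm_pos_iff.mpr hdne
  have hbq : 0 < quadF B d := lt_of_lt_of_le (by positivity) (hBlow d)
  -- symmetry of B as a linear map
  have hsymT : (Matrix.toEuclideanLin B).IsSymmetric := by
    apply Matrix.isHermitian_iff_isSymmetric.mp
    rw [Matrix.IsHermitian]
    ext i j
    simpa [Matrix.conjTranspose_apply] using congrFun (congrFun hBsymm i) j
  -- B is invertible
  have hquad_pos : ∀ u : Euc n, u ≠ 0 → 0 < quadF B u := fun u hu =>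
    lt_of_lt_of_le (by have := norm_pos_iff.mpr hu; positivity) (hBlow u)
  have hdet : IsUnit B.det := by
    rw [isUnit_iff_ne_zero]
    intro h0
    obtain ⟨v, hv0, hv⟩ := (Matrix.exists_mulVec_eq_zero_iff).mpr h0
    set u : Euc n := (WithLp.equiv 2 (Fin n → ℝ)).symm v with hu
    have hu0 : u ≠ 0 := by
      simpa [hu] using hv0
    have hTu : Matrix.toEuclideanLin B u = 0 := by
      rw [hu]
      change WithLp.toLp 2 (B *ᵥ v) = 0
      rw [hv]
      simp
    have : quadF B u = 0 := by
      rw [quadF, hTu, inner_zero_right]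
    exact absurd this (ne_of_gt (hquad_pos u hu0))
  have hmulTi : ∀ w : Euc n,
      Matrix.toEuclideanLin B (Matrix.toEuclideanLin B⁻¹ w) = w := by
    intro w
    have : Matrix.toEuclideanLin (B * B⁻¹) w
        = Matrix.toEuclideanLin B (Matrix.toEuclideanLin B⁻¹ w) := by
      simp [Matrix.toEuclideanLin_apply, Matrix.mulVec_mulVec]
    rw [← this, Matrix.mul_nonsing_inv B hdet]
    simp [Matrix.toEuclideanLin_apply]
  -- Cauchy-Schwarz in the B norm
  have hkey : ∀ s : ℝ, 0 ≤ quadF B⁻¹ r - 2 * s * ⟪r, d⟫ + s ^ 2 * quadF B d := by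
    intro s
    set u : Euc n := Matrix.toEuclideanLin B⁻¹ r - s • d with hu
    have h0 : (0:ℝ) ≤ quadF B u := le_trans (by positivity) (hBlow u)
    have hexp : quadF B u = quadF B⁻¹ r - 2 * s * ⟪r, d⟫ + s ^ 2 * quadF B d := by
      rw [quadF, hu]
      rw [map_sub, LinearMap.map_smul]
      rw [inner_sub_left, inner_sub_right, inner_sub_right]
      rw [real_inner_smul_left, real_inner_smul_left, real_inner_smul_right,
        real_inner_smul_right, hmulTi]
      have e1 : ⟪Matrix.toEuclideanLin B⁻¹ r, Matrix.toEuclideanLin B d⟫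
          = ⟪r, d⟫ := by
        rw [← hsymT (Matrix.toEuclideanLin B⁻¹ r) d, hmulTi]
      have e2 : ⟪Matrix.toEuclideanLin B⁻¹ r, r⟫ = quadF B⁻¹ r :=
        real_inner_comm _ _
      have e3 : ⟪d, r⟫ = ⟪r, d⟫ := real_inner_comm _ _
      rw [e1, e2, e3]
      unfold quadF
      ring
    linarith [hexp ▸ h0]
  have hcs : ⟪r, d⟫ ≤ MNorm B⁻¹ r * MNorm B d := by
    have hqi : 0 ≤ quadF B⁻¹ r := by have := hkey 0; linarith
    rcases le_or_gt ⟪r, d⟫ 0 with h | h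
    · have : 0 ≤ MNorm B⁻¹ r * MNorm B d := by
        unfold MNorm; positivity
      linarith
    · have hk := hkey (⟪r, d⟫ / quadF B d)
      have hsq : ⟪r, d⟫ ^ 2 ≤ quadF B⁻¹ r * quadF B d := by
        have h1 : (⟪r, d⟫ / quadF B d) ^ 2 * quadF B d = ⟪r, d⟫ ^ 2 / quadF B d := by
          field_simp
        rw [h1] at hk
        have h2 : 2 * (⟪r, d⟫ / quadF B d) * ⟪r, d⟫ = 2 * ⟪r, d⟫ ^ 2 / quadF B d := by
          field_simp
        rw [h2] at hk
        have h3 : 2 * ⟪r, d⟫ ^ 2 / quadF B d = ⟪r, d⟫ ^ 2 / quadF B d + ⟪r, d⟫ ^ 2 / quadF B d := by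
          ring
        rw [h3] at hk
        have := (div_le_iff₀ hbq).mp (by linarith : ⟪r, d⟫ ^ 2 / quadF B d ≤ quadF B⁻¹ r)
        linarith
      have : ⟪r, d⟫ ≤ Real.sqrt (quadF B⁻¹ r * quadF B d) := by
        rw [show (⟪r, d⟫ : ℝ) = Real.sqrt (⟪r, d⟫ ^ 2) by
          rw [Real.sqrt_sq h.le]]
        exact Real.sqrt_le_sqrt hsq
      rwa [Real.sqrt_mul hqi] at this
  have hMd : MNorm B d ^ 2 = quadF B d := Real.sq_sqrt hbq.le
  have hMd0 : 0 ≤ MNorm B d := Real.sqrt_nonneg _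
  have hrd : ⟪r, d⟫ ≤ (1 - θbar) * quadF B d := by
    have := mul_le_mul_of_nonneg_right hres hMd0
    calc ⟪r, d⟫ ≤ MNorm B⁻¹ r * MNorm B d := hcs
      _ ≤ (1 - θbar) * MNorm B d * MNorm B d := this
      _ = (1 - θbar) * quadF B d := by rw [mul_assoc, ← sq, hMd]
  -- finite values of h₁
  set a₁ := (h₁ x).toReal with ha₁
  set b₁ := (h₁ xp).toReal with hb₁
  have hxa : h₁ x = (a₁ : EReal) := (EReal.coe_toReal hfin (hprop.1 x)).symm
  have hxb : h₁ xp = (b₁ : EReal) := (EReal.coe_toReal hfinp (hprop.1 xp)).symm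
  -- the subgradient inequality for h₁ at xp evaluated at x
  set v : Euc n := r - (g' x - ξ) - (Matrix.toEuclideanLin B) d with hv
  have hA : b₁ - a₁ ≤ ⟪v, d⟫ := by
    have h := hr x
    rw [hxa, hxb] at h
    have hxd : x - xp = -d := by rw [hd]; abel
    rw [hxd] at h
    have h' : (b₁ : EReal) + ((⟪v, -d⟫ : ℝ) : EReal) ≤ (a₁ : EReal) := h
    rw [← EReal.coe_add] at h'
    have h'' : b₁ + ⟪v, -d⟫ ≤ a₁ := EReal.coe_le_coe_iff.mp h'
    rw [inner_neg_right] at h''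
    linarith
  -- directional derivative bound
  obtain ⟨c, hc0, hct⟩ := hdir d
  set K : ℝ := ⟪g' x, d⟫ + (b₁ - a₁) - ⟪ξ, d⟫ with hK
  set φ : ℝ → ℝ := fun t => t⁻¹ * (g (x + t • d) - g x) + (b₁ - a₁) - ⟪ξ, d⟫ with hφdef
  have hφ : Tendsto φ (𝓝[>] (0:ℝ)) (𝓝 K) := by
    have h1 : HasDerivAt (fun t : ℝ => x + t • d) d 0 := by
      simpa using ((hasDerivAt_id (0:ℝ)).smul_const d).const_add x
    have hfd : HasFDerivAt g ((InnerProductSpace.toDual ℝ (Euc n)) (g' x)) (x + (0:ℝ) • d) := by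
      simpa using hasGradientAt_iff_hasFDerivAt.mp (hg x)
    have h2 := hfd.comp_hasDerivAt 0 h1
    have h3 : Tendsto (slope (fun t : ℝ => g (x + t • d)) 0) (𝓝[≠] (0:ℝ)) (𝓝 ⟪g' x, d⟫) := by
      have := hasDerivAt_iff_tendsto_slope.mp h2
      simpa [InnerProductSpace.toDual_apply_apply, Function.comp_def] using this
    have h4 : Tendsto (fun t : ℝ => t⁻¹ * (g (x + t • d) - g x)) (𝓝[>] (0:ℝ))
        (𝓝 ⟪g' x, d⟫) := by
      refine (h3.mono_left (nhdsWithin_mono _ ?_)).congr' ?_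
      · exact fun t ht => ne_of_gt ht
      · filter_upwards [self_mem_nhdsWithin] with t ht
        simp [slope_def_field, div_eq_inv_mul]
    exact (h4.add_const _).sub_const _
  have hqle : ∀ᶠ t in 𝓝[>] (0:ℝ),
      ((t⁻¹ : ℝ) : EReal) * (fObj g h₁ h₂ (x + t • d) - fObj g h₁ h₂ x)
        ≤ ((φ t : ℝ) : EReal) := by
    filter_upwards [Ioo_mem_nhdsGT_of_mem (Set.mem_Ico.mpr ⟨le_refl (0:ℝ), one_pos⟩)]
      with t ht
    obtain ⟨ht0, ht1⟩ := ht
    have hconvpt : x + t • d = (1 - t) • x + t • xp := by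
      rw [hd]; module
    have hcv := hconv x xp (1 - t) t (by linarith) ht0.le (by ring)
    rw [← hconvpt, hxa, hxb] at hcv
    have hcv' : h₁ (x + t • d) ≤ (((1 - t) * a₁ + t * b₁ : ℝ) : EReal) := by
      calc h₁ (x + t • d) ≤ ((1 - t : ℝ) : EReal) * (a₁ : EReal) + ((t : ℝ) : EReal) * (b₁ : EReal) := hcv
        _ = (((1 - t) * a₁ + t * b₁ : ℝ) : EReal) := by
            rw [← EReal.coe_mul, ← EReal.coe_mul, ← EReal.coe_add]
    have hne_top : h₁ (x + t • d) ≠ ⊤ := ne_top_of_le_ne_top (EReal.coe_ne_top _) hcv'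
    set e : ℝ := (h₁ (x + t • d)).toReal with he
    have hxe : h₁ (x + t • d) = (e : EReal) :=
      (EReal.coe_toReal hne_top (hprop.1 _)).symm
    have heb : e ≤ (1 - t) * a₁ + t * b₁ := by
      rw [hxe] at hcv'
      exact EReal.coe_le_coe_iff.mp hcv'
    have hf1 : fObj g h₁ h₂ (x + t • d)
        = ((g (x + t • d) + e - h₂ (x + t • d) : ℝ) : EReal) := by
      rw [fObj, hxe, ← EReal.coe_add, ← EReal.coe_sub]
    have hf2 : fObj g h₁ h₂ x = ((g x + a₁ - h₂ x : ℝ) : EReal) := by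
      rw [fObj, hxa, ← EReal.coe_add, ← EReal.coe_sub]
    rw [hf1, hf2, ← EReal.coe_sub, ← EReal.coe_mul]
    rw [EReal.coe_le_coe_iff]
    -- now a real inequality
    have hh2 : t * ⟪ξ, d⟫ ≤ h₂ (x + t • d) - h₂ x := by
      have := hξ (x + t • d)
      have hsub : x + t • d - x = t • d := by abel
      rw [hsub, real_inner_smul_right] at this
      linarith
    have hti : 0 < t⁻¹ := inv_pos.mpr ht0
    have htt : t * t⁻¹ = 1 := mul_inv_cancel₀ ht0.ne'
    have key1 : t⁻¹ * (e - a₁) ≤ b₁ - a₁ := by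
      have hr1 : t * (b₁ - a₁) = t * b₁ - t * a₁ := by ring
      have hr2 : (1 - t) * a₁ + t * b₁ = a₁ + (t * b₁ - t * a₁) := by ring
      have : e - a₁ ≤ t * (b₁ - a₁) := by rw [hr1]; linarith [hr2 ▸ heb]
      calc t⁻¹ * (e - a₁) ≤ t⁻¹ * (t * (b₁ - a₁)) := by
            exact mul_le_mul_of_nonneg_left this hti.le
        _ = b₁ - a₁ := by rw [← mul_assoc, inv_mul_cancel₀ ht0.ne', one_mul]
    have key2 : t⁻¹ * (h₂ x - h₂ (x + t • d)) ≤ -⟪ξ, d⟫ := by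
      have : h₂ x - h₂ (x + t • d) ≤ t * (-⟪ξ, d⟫) := by
        have hr3 : t * (-⟪ξ, d⟫) = -(t * ⟪ξ, d⟫) := by ring
        rw [hr3]; linarith
      calc t⁻¹ * (h₂ x - h₂ (x + t • d)) ≤ t⁻¹ * (t * (-⟪ξ, d⟫)) :=
            mul_le_mul_of_nonneg_left this hti.le
        _ = -⟪ξ, d⟫ := by rw [← mul_assoc, inv_mul_cancel₀ ht0.ne', one_mul]
    have expand : t⁻¹ * ((g (x + t • d) + e - h₂ (x + t • d)) - (g x + a₁ - h₂ x))
        = t⁻¹ * (g (x + t • d) - g x) + t⁻¹ * (e - a₁) + t⁻¹ * (h₂ x - h₂ (x + t • d)) := by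
      ring
    rw [expand, hφdef]
    have hr3 : t * (-⟪ξ, d⟫) = -(t * ⟪ξ, d⟫) := by ring
    linarith [key1, key2]
  have hcK : c ≤ ((K : ℝ) : EReal) := by
    refine le_of_tendsto_of_tendsto hct ?_ hqle
    exact EReal.tendsto_coe.mpr (by rw [hK]; exact hφ)
  have hK0 : (0 : ℝ) ≤ K := by
    have : ((0 : ℝ) : EReal) ≤ ((K : ℝ) : EReal) := le_trans (by simpa using hc0) hcK
    exact EReal.coe_le_coe_iff.mp this
  -- combine
  have hvd : ⟪v, d⟫ = ⟪r, d⟫ - ⟪g' x, d⟫ + ⟪ξ, d⟫ - quadF B d := by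
    rw [hv, inner_sub_left, inner_sub_left, inner_sub_left]
    have : ⟪Matrix.toEuclideanLin B d, d⟫ = quadF B d := by
      rw [quadF, real_inner_comm]
    rw [this]
    ring
  have hfinal : K ≤ ⟪r, d⟫ - quadF B d := by
    rw [hK]
    have := hA
    rw [hvd] at this
    linarith
  nlinarith [hK0, hfinal, hrd, hbq, hθbar0]
end
end

section
/- Let g : ℝⁿ → ℝ be differentiable with L-Lipschitz gradient, h₁ : ℝⁿ → ℝ ∪ {+∞} a proper lower semicontinuous convex function, h₂ : ℝⁿ → ℝ a continuous convex function, f = g + h₁ − h₂. Let x, x⁺ ∈ ℝⁿ with h₁(x) and h₁(x⁺) finite, d = x⁺ − x, and let ξ ∈ ∂h₂(x). Then for every η ∈ (0, 1], f(x + ηd) ≤ f(x) + η((∇g(x) − ξ)ᵀd + h₁(x⁺) − h₁(x)) + (η²L/2)‖d‖². -/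
open Matrix Filter Topology RealInnerProductSpace

noncomputable section

lemma descent_lemma {n : ℕ} (L : ℝ) (g : Euc n → ℝ) (g' : Euc n → Euc n)
    (hg : ∀ y : Euc n, HasGradientAt g (g' y) y)
    (hLip : ∀ u v : Euc n, ‖g' u - g' v‖ ≤ L * ‖u - v‖) (x v : Euc n) :
    g (x + v) ≤ g x + ⟪g' x, v⟫ + L / 2 * ‖v‖ ^ 2 := by
  set F : ℝ → ℝ := fun t => g x + t * ⟪g' x, v⟫ + L * t ^ 2 / 2 * ‖v‖ ^ 2 - g (x + t • v) with hF
  have hder : ∀ t : ℝ, HasDerivAt (fun s => g (x + s • v)) (⟪g' (x + t • v), v⟫) t := by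
    intro t
    have hc : HasDerivAt (fun s : ℝ => x + s • v) v t := by
      simpa using ((hasDerivAt_id t).smul_const v).const_add x
    have := ((hg (x + t • v)).hasFDerivAt.comp_hasDerivAt t hc)
    simp at this; exact this
  have hderF : ∀ t : ℝ, HasDerivAt F (⟪g' x, v⟫ + L * t * ‖v‖ ^ 2 - ⟪g' (x + t • v), v⟫) t := by
    intro t
    have h1 : HasDerivAt (fun t : ℝ => g x + t * ⟪g' x, v⟫ + L * t ^ 2 / 2 * ‖v‖ ^ 2)
        (⟪g' x, v⟫ + L * t * ‖v‖ ^ 2) t := by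
      have : HasDerivAt (fun t : ℝ => g x + t * ⟪g' x, v⟫ + L * t ^ 2 / 2 * ‖v‖ ^ 2)
          (0 + 1 * ⟪g' x, v⟫ + L * (2 * t ^ 1) / 2 * ‖v‖ ^ 2) t := by
        exact (((hasDerivAt_const t (g x)).add (((hasDerivAt_id t).mul_const _))).add
          ((((hasDerivAt_pow 2 t).const_mul L).div_const 2).mul_const _))
      convert this using 1; ring
    exact h1.sub (hder t)
  have hmono : MonotoneOn F (Set.Icc 0 1) := by
    apply monotoneOn_of_deriv_nonneg (convex_Icc 0 1)
    · exact (Differentiable.continuous (fun t => (hderF t).differentiableAt)).continuousOn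
    · intro t _; exact (hderF t).differentiableAt.differentiableWithinAt
    · intro t ht
      rw [interior_Icc] at ht
      rw [(hderF t).deriv]
      have h2 : ⟪g' (x + t • v) - g' x, v⟫ ≤ L * t * ‖v‖ ^ 2 := by
        calc ⟪g' (x + t • v) - g' x, v⟫ ≤ ‖g' (x + t • v) - g' x‖ * ‖v‖ :=
              real_inner_le_norm _ _
          _ ≤ L * ‖(x + t • v) - x‖ * ‖v‖ :=
              mul_le_mul_of_nonneg_right (hLip _ _) (norm_nonneg v)
          _ = L * t * ‖v‖ ^ 2 := by
              rw [add_sub_cancel_left, norm_smul, Real.norm_eq_abs, abs_of_pos ht.1]; ring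
      rw [inner_sub_left] at h2
      linarith
  have h01 := hmono (Set.left_mem_Icc.mpr one_pos.le) (Set.right_mem_Icc.mpr one_pos.le) one_pos.le
  simp only [hF] at h01
  simp only [zero_smul, add_zero, zero_mul, one_smul, one_mul] at h01
  nlinarith [h01]

/-- the descent inequality
`f(x + ηd) ≤ f(x) + η((∇g(x) - ξ)ᵀd + h₁(x⁺) - h₁(x)) + (η²L/2)‖d‖²` for `η ∈ (0,1]`. -/
theorem descent_inequality
    {n : ℕ} (L : ℝ)
    (g : Euc n → ℝ) (g' : Euc n → Euc n)
    (h₁ : Euc n → EReal) (h₂ : Euc n → ℝ)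
    (x xp ξ d : Euc n)
    (hL : 0 ≤ L)
    (hg : ∀ y : Euc n, HasGradientAt g (g' y) y)
    (hLip : ∀ u v : Euc n, ‖g' u - g' v‖ ≤ L * ‖u - v‖)
    (hprop : ProperF h₁) (hlsc : LowerSemicontinuous h₁) (hconv : EConvexF h₁)
    (hh₂cont : Continuous h₂) (hh₂conv : ConvexOn ℝ Set.univ h₂)
    (hfin : h₁ x ≠ ⊤) (hfinp : h₁ xp ≠ ⊤)
    (hd : d = xp - x)
    (hξ : RSubgradAt h₂ ξ x) :
    ∀ η : ℝ, 0 < η → η ≤ 1 →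
      fObj g h₁ h₂ (x + η • d) ≤ fObj g h₁ h₂ x +
        ((η * (⟪g' x - ξ, d⟫ + (h₁ xp).toReal - (h₁ x).toReal) +
          η ^ 2 * L / 2 * ‖d‖ ^ 2 : ℝ) : EReal) := by
  intro η hη hη1
  set a := (h₁ x).toReal with ha
  set b := (h₁ xp).toReal with hb
  have hxa : h₁ x = (a : EReal) := (EReal.coe_toReal hfin (hprop.1 x)).symm
  have hxb : h₁ xp = (b : EReal) := (EReal.coe_toReal hfinp (hprop.1 xp)).symm
  -- convexity bound on h₁
  have hcomb : x + η • d = (1 - η) • x + η • xp := by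
    rw [hd]; module
  have hconv1 : h₁ (x + η • d) ≤ (((1 - η) * a + η * b : ℝ) : EReal) := by
    rw [hcomb]
    calc h₁ ((1 - η) • x + η • xp)
        ≤ ((1 - η : ℝ) : EReal) * h₁ x + (η : EReal) * h₁ xp :=
          hconv x xp (1 - η) η (by linarith) hη.le (by ring)
      _ = (((1 - η) * a + η * b : ℝ) : EReal) := by
          rw [hxa, hxb, ← EReal.coe_mul, ← EReal.coe_mul, ← EReal.coe_add]
  -- descent on g
  have hdesc : g (x + η • d) ≤ g x + η * ⟪g' x, d⟫ + η ^ 2 * L / 2 * ‖d‖ ^ 2 := by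
    have := descent_lemma L g g' hg hLip x (η • d)
    rw [real_inner_smul_right, norm_smul, Real.norm_eq_abs, abs_of_pos hη] at this
    calc g (x + η • d) ≤ g x + η * ⟪g' x, d⟫ + L / 2 * (|η| * ‖d‖) ^ 2 := by
          rw [abs_of_pos hη]; exact this
      _ = g x + η * ⟪g' x, d⟫ + η ^ 2 * L / 2 * ‖d‖ ^ 2 := by
          rw [abs_of_pos hη]; ring
  -- subgradient bound on h₂
  have hsub : h₂ x + η * ⟪ξ, d⟫ ≤ h₂ (x + η • d) := by
    have := hξ (x + η • d)
    rw [add_sub_cancel_left, real_inner_smul_right] at this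
    exact this
  -- real inequality
  have hreal : g (x + η • d) + ((1 - η) * a + η * b) - h₂ (x + η • d) ≤
      (g x + a - h₂ x) + (η * (⟪g' x - ξ, d⟫ + b - a) + η ^ 2 * L / 2 * ‖d‖ ^ 2) := by
    rw [inner_sub_left]
    nlinarith [hdesc, hsub]
  -- assemble in EReal
  have hLHS : fObj g h₁ h₂ (x + η • d) ≤
      ((g (x + η • d) + ((1 - η) * a + η * b) - h₂ (x + η • d) : ℝ) : EReal) := by
    unfold fObj
    rw [EReal.coe_sub, EReal.coe_add, sub_eq_add_neg, sub_eq_add_neg]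
    exact add_le_add (add_le_add_right hconv1 _) le_rfl
  have hRHS : fObj g h₁ h₂ x +
        ((η * (⟪g' x - ξ, d⟫ + b - a) + η ^ 2 * L / 2 * ‖d‖ ^ 2 : ℝ) : EReal)
      = (((g x + a - h₂ x) + (η * (⟪g' x - ξ, d⟫ + b - a) + η ^ 2 * L / 2 * ‖d‖ ^ 2) : ℝ) : EReal) := by
    unfold fObj
    rw [hxa, ← EReal.coe_add, ← EReal.coe_sub, ← EReal.coe_add]
  rw [hRHS]
  exact le_trans hLHS (EReal.coe_le_coe_iff.mpr hreal)
end
end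

section
/- Let g : ℝⁿ → ℝ be differentiable, h₁ : ℝⁿ → ℝ ∪ {+∞} a proper lower semicontinuous convex function, h₂ : ℝⁿ → ℝ a continuous convex function. Let x, x⁺ ∈ ℝⁿ with h₁(x) and h₁(x⁺) finite, d = x⁺ − x, ξ ∈ ∂h₂(x), B a symmetric positive definite matrix, and θ̄ ∈ (0,1]. If r ∈ ℝⁿ satisfies r − (∇g(x) − ξ) − B d ∈ ∂h₁(x⁺) and ‖r‖_{B⁻¹} ≤ (1 − θ̄)‖d‖_B, then (∇g(x) − ξ)ᵀd + h₁(x⁺) − h₁(x) ≤ −θ̄ ‖d‖_B². -/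
open Matrix Filter Topology RealInnerProductSpace

noncomputable section

/-- the sufficient decrease bound
`(∇g(x) - ξ)ᵀd + h₁(x⁺) - h₁(x) ≤ -θ̄‖d‖_B²` for the inexact subproblem solution. -/
theorem sufficient_decrease_bound
    {n : ℕ} (θbar : ℝ)
    (g : Euc n → ℝ) (g' : Euc n → Euc n)
    (h₁ : Euc n → EReal) (h₂ : Euc n → ℝ)
    (x xp ξ r d : Euc n) (B : Matrix (Fin n) (Fin n) ℝ)
    (hg : ∀ y : Euc n, HasGradientAt g (g' y) y)
    (hprop : ProperF h₁) (hlsc : LowerSemicontinuous h₁) (hconv : EConvexF h₁)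
    (hh₂cont : Continuous h₂) (hh₂conv : ConvexOn ℝ Set.univ h₂)
    (hfin : h₁ x ≠ ⊤) (hfinp : h₁ xp ≠ ⊤)
    (hd : d = xp - x)
    (hξ : RSubgradAt h₂ ξ x)
    (hB : B.PosDef)
    (hθbar0 : 0 < θbar) (hθbar1 : θbar ≤ 1)
    (hr : ESubgradAt h₁ (r - (g' x - ξ) - (Matrix.toEuclideanLin B) d) xp)
    (hres : MNorm B⁻¹ r ≤ (1 - θbar) * MNorm B d) :
    ⟪g' x - ξ, d⟫ + (h₁ xp).toReal - (h₁ x).toReal ≤ -θbar * quadF B d := by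

  classical
  set L := Matrix.toEuclideanLin B with hL
  set G := g' x - ξ with hG
  set v := r - G - L d with hv
  -- basic facts
  have hsym : ∀ u w : Euc n, ⟪(Matrix.toEuclideanLin B) u, w⟫ = ⟪u, (Matrix.toEuclideanLin B) w⟫ :=
    fun u w => Matrix.isHermitian_iff_isSymmetric.mp hB.1 u w
  have hquad_dot : ∀ (A : Matrix (Fin n) (Fin n) ℝ) (u : Euc n), quadF A u = u ⬝ᵥ (A *ᵥ u) := by
    intro A u
    simp [quadF, Matrix.toEuclideanLin_apply, PiLp.inner_apply, dotProduct, mul_comm]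
  have hquadB_nonneg : ∀ u : Euc n, 0 ≤ quadF B u := by
    intro u; rw [hquad_dot]; simpa using hB.posSemidef.dotProduct_mulVec_nonneg u
  have hBinv : (B⁻¹).PosDef := hB.inv
  have hquadBinv_nonneg : ∀ u : Euc n, 0 ≤ quadF B⁻¹ u := by
    intro u; rw [hquad_dot]; simpa using hBinv.posSemidef.dotProduct_mulVec_nonneg u
  have hinv_cancel : Matrix.toEuclideanLin B⁻¹ ((Matrix.toEuclideanLin B) d) = d := by
    rw [Matrix.toEuclideanLin_apply, Matrix.toEuclideanLin_apply]
    simp [Matrix.mulVec_mulVec, Matrix.nonsing_inv_mul B hB.det_pos.ne'.isUnit]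
  have hsyminv : ∀ u w : Euc n,
      ⟪(Matrix.toEuclideanLin B⁻¹) u, w⟫ = ⟪u, (Matrix.toEuclideanLin B⁻¹) w⟫ :=
    fun u w => Matrix.isHermitian_iff_isSymmetric.mp hBinv.1 u w
  -- Cauchy–Schwarz in the B-metric: ⟪r, d⟫ ≤ ‖r‖_{B⁻¹} ‖d‖_B
  have hexpand : ∀ t : ℝ,
      0 ≤ quadF B d * (t * t) + (-(2 * ⟪r, d⟫)) * t + quadF B⁻¹ r := by
    intro t
    have h0 : 0 ≤ quadF B⁻¹ (r - t • (L d)) := hquadBinv_nonneg _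
    have hexp : quadF B⁻¹ (r - t • (L d)) =
        quadF B d * (t * t) + (-(2 * ⟪r, d⟫)) * t + quadF B⁻¹ r := by
      have h1 : (Matrix.toEuclideanLin B⁻¹) (r - t • (L d)) =
          (Matrix.toEuclideanLin B⁻¹) r - t • d := by
        rw [LinearMap.map_sub, LinearMap.map_smul, hinv_cancel]
      have h2 : ⟪L d, (Matrix.toEuclideanLin B⁻¹) r⟫ = ⟪r, d⟫ := by
        rw [← hsyminv, hinv_cancel]; exact real_inner_comm _ _
      have h4 : ⟪L d, d⟫ = quadF B d := hsym d d
      unfold quadF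
      rw [h1]
      simp only [inner_sub_left, inner_sub_right, real_inner_smul_left, real_inner_smul_right]
      rw [h2, h4]
      have hq : quadF B d = ⟪d, L d⟫ := rfl
      rw [hq]
      ring
    rw [← hexp]; exact h0
  have hdisc : discrim (quadF B d) (-(2 * ⟪r, d⟫)) (quadF B⁻¹ r) ≤ 0 :=
    discrim_le_zero hexpand
  have hCS : ⟪r, d⟫ ≤ MNorm B⁻¹ r * MNorm B d := by
    rw [discrim] at hdisc
    have h1 : (2 * ⟪r, d⟫) ^ 2 ≤ 4 * quadF B d * quadF B⁻¹ r := by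
      nlinarith [hdisc]
    have h2 : ⟪r, d⟫ ^ 2 ≤ quadF B⁻¹ r * quadF B d := by nlinarith
    have h3 : MNorm B⁻¹ r * MNorm B d = Real.sqrt (quadF B⁻¹ r * quadF B d) := by
      rw [MNorm, MNorm, Real.sqrt_mul (hquadBinv_nonneg r)]
    rw [h3]
    calc ⟪r, d⟫ ≤ |⟪r, d⟫| := le_abs_self _
      _ = Real.sqrt (⟪r, d⟫ ^ 2) := (Real.sqrt_sq_eq_abs _).symm
      _ ≤ Real.sqrt (quadF B⁻¹ r * quadF B d) := Real.sqrt_le_sqrt h2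
  -- bound ⟪r,d⟫ ≤ (1-θ̄) quadF B d
  have hMB : MNorm B d * MNorm B d = quadF B d := Real.mul_self_sqrt (hquadB_nonneg d)
  have hMBnonneg : 0 ≤ MNorm B d := Real.sqrt_nonneg _
  have hrd : ⟪r, d⟫ ≤ (1 - θbar) * quadF B d := by
    calc ⟪r, d⟫ ≤ MNorm B⁻¹ r * MNorm B d := hCS
      _ ≤ ((1 - θbar) * MNorm B d) * MNorm B d := by
          exact mul_le_mul_of_nonneg_right hres hMBnonneg
      _ = (1 - θbar) * quadF B d := by rw [mul_assoc, hMB]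
  -- the subgradient inequality at y = x, real version
  have hbot := hprop.1
  have hEq : (h₁ xp).toReal + ⟪v, x - xp⟫ ≤ (h₁ x).toReal := by
    have h := hr x
    have hxf : h₁ x = ((h₁ x).toReal : EReal) := (EReal.coe_toReal hfin (hbot x)).symm
    have hxpf : h₁ xp = ((h₁ xp).toReal : EReal) := (EReal.coe_toReal hfinp (hbot xp)).symm
    rw [hxf, hxpf, ← EReal.coe_add, EReal.coe_le_coe_iff] at h
    exact h
  -- unpack v
  have hvd : ⟪v, x - xp⟫ = -⟪r, d⟫ + ⟪G, d⟫ + quadF B d := by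
    have hx_xp : x - xp = -d := by rw [hd]; abel
    rw [hx_xp, inner_neg_right, hv, inner_sub_left, inner_sub_left]
    have h5 : ⟪L d, d⟫ = quadF B d := hsym d d
    rw [h5]; ring
  have key : ⟪G, d⟫ + (h₁ xp).toReal - (h₁ x).toReal ≤ ⟪r, d⟫ - quadF B d := by
    have := hEq
    rw [hvd] at this
    linarith
  calc ⟪g' x - ξ, d⟫ + (h₁ xp).toReal - (h₁ x).toReal ≤ ⟪r, d⟫ - quadF B d := key
    _ ≤ (1 - θbar) * quadF B d - quadF B d := by linarith
    _ = -θbar * quadF B d := by ring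
end
end

section
/- Let s, z ∈ ℝⁿ be linearly independent with sᵀz > 0, let τ > 0, γ > 0, and define v = √(sᵀs)·(z/(sᵀz) − s/(sᵀs)) and φ* = −(sᵀz)² / ((sᵀs)(zᵀz) − (sᵀz)²), which satisfies φ* < 0. If φ > φ*, then the matrix B = τI − τ ssᵀ/(sᵀs) + γ zzᵀ/(sᵀz) + τφ vvᵀ is symmetric positive definite. -/
open Matrix

noncomputable section


lemma vecMulVec_mulVec' {n : ℕ} (a b x : Fin n → ℝ) :
    vecMulVec a b *ᵥ x = (b ⬝ᵥ x) • a := by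
  funext i
  simp only [mulVec, vecMulVec_apply, dotProduct, Pi.smul_apply, smul_eq_mul, Finset.sum_mul,
    Finset.mul_sum]
  exact Finset.sum_congr rfl fun j _ => by ring

lemma dot_self_nonneg' {n : ℕ} (y : Fin n → ℝ) : 0 ≤ y ⬝ᵥ y :=
  Finset.sum_nonneg fun i _ => mul_self_nonneg _

lemma expand_ineq {n : ℕ} (s z x : Fin n → ℝ) (α β : ℝ) :
    0 ≤ x ⬝ᵥ x - 2*α*(s ⬝ᵥ x) - 2*β*(z ⬝ᵥ x) + α^2*(s ⬝ᵥ s) + 2*α*β*(s ⬝ᵥ z) + β^2*(z ⬝ᵥ z) := by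
  have h := dot_self_nonneg' (x - α • s - β • z)
  have e : (x - α • s - β • z) ⬝ᵥ (x - α • s - β • z)
      = x ⬝ᵥ x - 2*α*(s ⬝ᵥ x) - 2*β*(z ⬝ᵥ x) + α^2*(s ⬝ᵥ s) + 2*α*β*(s ⬝ᵥ z) + β^2*(z ⬝ᵥ z) := by
    simp only [sub_dotProduct, dotProduct_sub, smul_dotProduct, dotProduct_smul, smul_eq_mul,
      dotProduct_comm x s, dotProduct_comm x z, dotProduct_comm z s]
    ring
  rw [e] at h
  exact h

lemma bessel {n : ℕ} (s z x : Fin n → ℝ)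
    (hD : 0 < (s ⬝ᵥ s) * (z ⬝ᵥ z) - (s ⬝ᵥ z) ^ 2) :
    (z ⬝ᵥ z)*(s ⬝ᵥ x)^2 - 2*(s ⬝ᵥ z)*(s ⬝ᵥ x)*(z ⬝ᵥ x) + (s ⬝ᵥ s)*(z ⬝ᵥ x)^2
      ≤ ((s ⬝ᵥ s) * (z ⬝ᵥ z) - (s ⬝ᵥ z) ^ 2) * (x ⬝ᵥ x) := by
  set S := s ⬝ᵥ s; set Z := z ⬝ᵥ z; set P := s ⬝ᵥ z
  set a := s ⬝ᵥ x; set b := z ⬝ᵥ x; set X2 := x ⬝ᵥ x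
  set D := S * Z - P ^ 2 with hDdef
  have h := expand_ineq s z x ((Z*a - P*b)/D) ((S*b - P*a)/D)
  have e : X2 - 2*((Z*a - P*b)/D)*a - 2*((S*b - P*a)/D)*b + ((Z*a - P*b)/D)^2*S
      + 2*((Z*a - P*b)/D)*((S*b - P*a)/D)*P + ((S*b - P*a)/D)^2*Z
      = X2 - (Z*a^2 - 2*P*a*b + S*b^2)/D := by
    rw [hDdef]
    have hD0 : S * Z - P ^ 2 ≠ 0 := hD.ne'
    simp only [div_eq_mul_inv]
    have h1 : (S * Z - P ^ 2) * (S * Z - P ^ 2)⁻¹ = 1 := mul_inv_cancel₀ hD0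
    linear_combination ((Z*a^2 - 2*P*a*b + S*b^2) * (S * Z - P ^ 2)⁻¹) * h1
  rw [e] at h
  have := (div_le_iff₀ hD).mp (by linarith : (Z*a^2 - 2*P*a*b + S*b^2)/D ≤ X2)
  linarith

lemma scalar_core (S Z P τ γ φ a b X2 : ℝ) (hS : 0 < S) (hP : 0 < P)
    (hD : 0 < S * Z - P ^ 2) (hτ : 0 < τ) (hγ : 0 < γ)
    (hφ : -(P ^ 2) / (S * Z - P ^ 2) < φ) (hX2 : 0 < X2)
    (hBess : Z * a ^ 2 - 2 * P * a * b + S * b ^ 2 ≤ (S * Z - P ^ 2) * X2) :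
    0 < τ * X2 - τ / S * a ^ 2 + γ / P * b ^ 2 + τ * φ * (S * (b / P - a / S) ^ 2) := by
  have hφ' : 0 < φ * (S * Z - P ^ 2) + P ^ 2 := by
    have := (div_lt_iff₀ hD).mp hφ
    nlinarith
  have hA : 0 ≤ S * (S * Z - P ^ 2) * X2 - (S * Z - P ^ 2) * a ^ 2 - (S * b - P * a) ^ 2 := by
    nlinarith [mul_le_mul_of_nonneg_left hBess hS.le]
  have key : (τ * X2 - τ / S * a ^ 2 + γ / P * b ^ 2 + τ * φ * (S * (b / P - a / S) ^ 2))
      * (S * (S * Z - P ^ 2) * P ^ 2)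
      = τ * P ^ 2 * (S * (S * Z - P ^ 2) * X2 - (S * Z - P ^ 2) * a ^ 2 - (S * b - P * a) ^ 2)
        + γ * b ^ 2 * S * (S * Z - P ^ 2) * P
        + τ * (φ * (S * Z - P ^ 2) + P ^ 2) * (S * b - P * a) ^ 2 := by
    field_simp
    ring
  have hden : 0 < S * (S * Z - P ^ 2) * P ^ 2 := by positivity
  have final : ∀ {L : ℝ}, 0 < L * (S * (S * Z - P ^ 2) * P ^ 2) → 0 < L := by
    intro L h
    rcases mul_pos_iff.mp h with ⟨h1, _⟩ | ⟨_, h2⟩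
    · exact h1
    · linarith
  apply final
  rw [key]
  have h1 : 0 ≤ τ * P ^ 2 * (S * (S * Z - P ^ 2) * X2 - (S * Z - P ^ 2) * a ^ 2
      - (S * b - P * a) ^ 2) := mul_nonneg (by positivity) hA
  have h2 : 0 ≤ γ * b ^ 2 * S * (S * Z - P ^ 2) * P := by positivity
  have h3 : 0 ≤ τ * (φ * (S * Z - P ^ 2) + P ^ 2) * (S * b - P * a) ^ 2 :=
    mul_nonneg (mul_nonneg hτ.le hφ'.le) (sq_nonneg _)
  rcases eq_or_ne (S * b - P * a) 0 with hc0 | hc0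
  · rcases eq_or_ne a 0 with ha | ha
    · have hb : b = 0 := by
        have hSb : S * b = 0 := by rw [ha] at hc0; linarith
        exact (mul_eq_zero.mp hSb).resolve_left hS.ne'
      have h1' : 0 < τ * P ^ 2 * (S * (S * Z - P ^ 2) * X2 - (S * Z - P ^ 2) * a ^ 2
          - (S * b - P * a) ^ 2) := by
        rw [ha, hb]
        have := mul_pos (mul_pos hS hD) hX2
        nlinarith [mul_pos (show (0:ℝ) < τ * P ^ 2 by positivity) this]
      linarith
    · have hb : b ≠ 0 := by
        intro hb0
        apply ha
        have : P * a = 0 := by rw [hb0] at hc0; linarith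
        exact (mul_eq_zero.mp this).resolve_left hP.ne'
      have hb2 : 0 < b ^ 2 := by positivity
      have h2' : 0 < γ * b ^ 2 * S * (S * Z - P ^ 2) * P := by positivity
      linarith
  · have hc2 : 0 < (S * b - P * a) ^ 2 := by positivity
    have h3' : 0 < τ * (φ * (S * Z - P ^ 2) + P ^ 2) * (S * b - P * a) ^ 2 :=
      mul_pos (mul_pos hτ hφ') hc2
    linarith

/-- positive definiteness of the memoryless modified spectral scaling
Broyden family matrix `B = τI - τssᵀ/(sᵀs) + γzzᵀ/(sᵀz) + τφvvᵀ` for `φ > φ*`. -/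
theorem broyden_family_posDef
    {n : ℕ} (s z : Fin n → ℝ) (τ γ φ : ℝ)
    (hind : LinearIndependent ℝ ![s, z])
    (hsz : 0 < s ⬝ᵥ z) (hτ : 0 < τ) (hγ : 0 < γ)
    (v : Fin n → ℝ)
    (hv : v = Real.sqrt (s ⬝ᵥ s) • ((s ⬝ᵥ z)⁻¹ • z - (s ⬝ᵥ s)⁻¹ • s))
    (φstar : ℝ)
    (hφstar : φstar = -(s ⬝ᵥ z) ^ 2 / ((s ⬝ᵥ s) * (z ⬝ᵥ z) - (s ⬝ᵥ z) ^ 2))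
    (hφ : φstar < φ) :
    φstar < 0 ∧
      (τ • (1 : Matrix (Fin n) (Fin n) ℝ)
        - (τ / (s ⬝ᵥ s)) • vecMulVec s s
        + (γ / (s ⬝ᵥ z)) • vecMulVec z z
        + (τ * φ) • vecMulVec v v).PosDef := by
  obtain ⟨hz, hsnm⟩ := linearIndependent_fin2.mp hind
  simp only [Matrix.cons_val_one, Matrix.head_cons, Matrix.cons_val_zero] at hz hsnm
  have hs : s ≠ 0 := fun h => hsnm 0 (by simp [h])
  have hS : 0 < s ⬝ᵥ s := by
    have := dotProduct_self_star_pos_iff (v := s) (R := ℝ)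
    simpa using this.mpr hs
  have hD : 0 < (s ⬝ᵥ s) * (z ⬝ᵥ z) - (s ⬝ᵥ z) ^ 2 := by
    set u := z - ((s ⬝ᵥ z) / (s ⬝ᵥ s)) • s with hu
    have hune : u ≠ 0 := by
      intro h0
      apply hsnm ((s ⬝ᵥ s) / (s ⬝ᵥ z))
      have hzu : z = ((s ⬝ᵥ z) / (s ⬝ᵥ s)) • s := sub_eq_zero.mp h0
      have h2 : ((s ⬝ᵥ s) / (s ⬝ᵥ z)) • z
          = ((s ⬝ᵥ s) / (s ⬝ᵥ z)) • (((s ⬝ᵥ z) / (s ⬝ᵥ s)) • s) := by rw [← hzu]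
      have h3 : (s ⬝ᵥ s) / (s ⬝ᵥ z) * ((s ⬝ᵥ z) / (s ⬝ᵥ s)) = 1 := by
        field_simp
      rw [h2, smul_smul, h3, one_smul]
    have huu : 0 < u ⬝ᵥ u := by
      have := dotProduct_self_star_pos_iff (v := u) (R := ℝ)
      simpa using this.mpr hune
    have e : u ⬝ᵥ u = (z ⬝ᵥ z) - (s ⬝ᵥ z) ^ 2 / (s ⬝ᵥ s) := by
      rw [hu]
      simp only [sub_dotProduct, dotProduct_sub, smul_dotProduct, dotProduct_smul, smul_eq_mul,
        dotProduct_comm z s]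
      field_simp
      ring
    rw [e] at huu
    have := mul_pos hS huu
    calc (0:ℝ) < (s ⬝ᵥ s) * ((z ⬝ᵥ z) - (s ⬝ᵥ z) ^ 2 / (s ⬝ᵥ s)) := this
    _ = (s ⬝ᵥ s) * (z ⬝ᵥ z) - (s ⬝ᵥ z) ^ 2 := by field_simp
  have hφstar0 : φstar < 0 := by
    rw [hφstar]
    have := pow_pos hsz 2
    exact div_neg_of_neg_of_pos (by linarith) hD
  refine ⟨hφstar0, posDef_iff_dotProduct_mulVec.mpr ⟨?_, ?_⟩⟩
  · -- Hermitian
    have hvv : ∀ (c : ℝ) (a : Fin n → ℝ), (c • vecMulVec a a).IsHermitian := fun c a => by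
      ext i j
      simp [Matrix.conjTranspose_apply, Matrix.smul_apply, vecMulVec_apply,
        mul_comm (a i) (a j)]
    have h1 : (τ • (1 : Matrix (Fin n) (Fin n) ℝ)).IsHermitian := by
      ext i j
      simp [Matrix.conjTranspose_apply, Matrix.one_apply, eq_comm]
    exact ((h1.sub (hvv _ s)).add (hvv _ z)).add (hvv _ v)
  · intro x hx
    have hX2 : 0 < x ⬝ᵥ x := by
      have := dotProduct_self_star_pos_iff (v := x) (R := ℝ)
      simpa using this.mpr hx
    have hstar : star x = x := by
      funext i; simp
    have hmv : (τ • (1 : Matrix (Fin n) (Fin n) ℝ)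
        - (τ / (s ⬝ᵥ s)) • vecMulVec s s
        + (γ / (s ⬝ᵥ z)) • vecMulVec z z
        + (τ * φ) • vecMulVec v v) *ᵥ x
        = τ • x - (τ / (s ⬝ᵥ s)) • ((s ⬝ᵥ x) • s) + (γ / (s ⬝ᵥ z)) • ((z ⬝ᵥ x) • z)
          + (τ * φ) • ((v ⬝ᵥ x) • v) := by
      simp [add_mulVec, sub_mulVec, smul_mulVec, one_mulVec, vecMulVec_mulVec']
    rw [hstar, hmv]
    have hform : x ⬝ᵥ (τ • x - (τ / (s ⬝ᵥ s)) • ((s ⬝ᵥ x) • s) + (γ / (s ⬝ᵥ z)) • ((z ⬝ᵥ x) • z)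
          + (τ * φ) • ((v ⬝ᵥ x) • v))
        = τ * (x ⬝ᵥ x) - (τ / (s ⬝ᵥ s)) * (s ⬝ᵥ x) ^ 2 + (γ / (s ⬝ᵥ z)) * (z ⬝ᵥ x) ^ 2
          + (τ * φ) * (v ⬝ᵥ x) ^ 2 := by
      simp only [dotProduct_add, dotProduct_sub, dotProduct_smul, smul_eq_mul,
        dotProduct_comm x s, dotProduct_comm x z, dotProduct_comm x v]
      ring
    rw [hform]
    have hvx : v ⬝ᵥ x = Real.sqrt (s ⬝ᵥ s) * ((s ⬝ᵥ z)⁻¹ * (z ⬝ᵥ x) - (s ⬝ᵥ s)⁻¹ * (s ⬝ᵥ x)) := by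
      rw [hv]
      simp only [smul_dotProduct, sub_dotProduct, smul_eq_mul]
    have hvx2 : (v ⬝ᵥ x) ^ 2
        = (s ⬝ᵥ s) * ((z ⬝ᵥ x) / (s ⬝ᵥ z) - (s ⬝ᵥ x) / (s ⬝ᵥ s)) ^ 2 := by
      rw [hvx, mul_pow, Real.sq_sqrt hS.le]
      field_simp
    rw [hvx2]
    have hBess := bessel s z x hD
    have := scalar_core (s ⬝ᵥ s) (z ⬝ᵥ z) (s ⬝ᵥ z) τ γ φ (s ⬝ᵥ x) (z ⬝ᵥ x) (x ⬝ᵥ x)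
      hS hsz hD hτ hγ (by rw [hφstar] at hφ; exact hφ) hX2 hBess
    linarith [this]
end
end

section
/- Let s, z ∈ ℝⁿ be linearly independent with sᵀz > 0, let τ > 0, γ > 0, and define v = √(sᵀs)·(z/(sᵀz) − s/(sᵀs)), w = √(zᵀz)·(s/(sᵀz) − z/(zᵀz)), and φ* = −(sᵀz)² / ((sᵀs)(zᵀz) − (sᵀz)²). Let φ > φ* and set φᴴ = φ*(1 − φ)/(φ* − φ). Then the matrix H = (1/τ)I − (1/τ) zzᵀ/(zᵀz) + (1/γ) ssᵀ/(sᵀz) + (1/τ)φᴴ wwᵀ is the inverse of the matrix B = τI − τ ssᵀ/(sᵀs) + γ zzᵀ/(sᵀz) + τφ vvᵀ, i.e., HB = I. -/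
open Matrix

noncomputable section

lemma dp_self_pos {n : ℕ} {v : Fin n → ℝ} (h : v ≠ 0) : 0 < v ⬝ᵥ v := by
  have h1 : 0 ≤ v ⬝ᵥ v := Finset.sum_nonneg fun i _ => mul_self_nonneg _
  rcases h1.lt_or_eq with h2 | h2
  · exact h2
  · exact absurd (dotProduct_self_eq_zero.mp h2.symm) h

lemma vmv_mul_vmv {n : ℕ} (a b c d : Fin n → ℝ) :
    vecMulVec a b * vecMulVec c d = (b ⬝ᵥ c) • vecMulVec a d := by
  ext i j
  simp [mul_apply, vecMulVec_apply, dotProduct, Finset.sum_mul, Finset.mul_sum]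
  congr 1; ext k; ring

lemma vmv_smul_left {n : ℕ} (r : ℝ) (a b : Fin n → ℝ) :
    vecMulVec (r • a) b = r • vecMulVec a b := by
  ext i j; simp [vecMulVec_apply]; ring

lemma vmv_smul_right {n : ℕ} (r : ℝ) (a b : Fin n → ℝ) :
    vecMulVec a (r • b) = r • vecMulVec a b := by
  ext i j; simp [vecMulVec_apply]; ring

lemma vmv_sub_left {n : ℕ} (a b c : Fin n → ℝ) :
    vecMulVec (a - b) c = vecMulVec a c - vecMulVec b c := by
  ext i j; simp [vecMulVec_apply]; ring

lemma vmv_sub_right {n : ℕ} (a b c : Fin n → ℝ) :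
    vecMulVec a (b - c) = vecMulVec a b - vecMulVec a c := by
  ext i j; simp [vecMulVec_apply]; ring

set_option maxHeartbeats 2000000 in
/-- the explicit inverse `H` of the memoryless modified spectral scaling
Broyden family matrix `B`, i.e. `H * B = 1`. -/
theorem broyden_family_inverse
    {n : ℕ} (s z : Fin n → ℝ) (τ γ φ φstar φH : ℝ)
    (hind : LinearIndependent ℝ ![s, z])
    (hsz : 0 < s ⬝ᵥ z) (hτ : 0 < τ) (hγ : 0 < γ)
    (v w : Fin n → ℝ)
    (hv : v = Real.sqrt (s ⬝ᵥ s) • ((s ⬝ᵥ z)⁻¹ • z - (s ⬝ᵥ s)⁻¹ • s))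
    (hw : w = Real.sqrt (z ⬝ᵥ z) • ((s ⬝ᵥ z)⁻¹ • s - (z ⬝ᵥ z)⁻¹ • z))
    (hφstar : φstar = -(s ⬝ᵥ z) ^ 2 / ((s ⬝ᵥ s) * (z ⬝ᵥ z) - (s ⬝ᵥ z) ^ 2))
    (hφ : φstar < φ)
    (hφH : φH = φstar * (1 - φ) / (φstar - φ)) :
    ((1 / τ) • (1 : Matrix (Fin n) (Fin n) ℝ)
        - (1 / (τ * (z ⬝ᵥ z))) • vecMulVec z z
        + (1 / (γ * (s ⬝ᵥ z))) • vecMulVec s s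
        + (φH / τ) • vecMulVec w w) *
      (τ • (1 : Matrix (Fin n) (Fin n) ℝ)
        - (τ / (s ⬝ᵥ s)) • vecMulVec s s
        + (γ / (s ⬝ᵥ z)) • vecMulVec z z
        + (τ * φ) • vecMulVec v v) = 1 := by
  have hs0 : s ≠ 0 := by
    have := hind.ne_zero 0; simpa using this
  have hz0 : z ≠ 0 := by
    have := hind.ne_zero 1; simpa using this
  have ha : 0 < s ⬝ᵥ s := dp_self_pos hs0
  have hc : 0 < z ⬝ᵥ z := dp_self_pos hz0
  have hu0 : (z ⬝ᵥ z) • s - (s ⬝ᵥ z) • z ≠ 0 := by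
    intro h
    have h2 := (LinearIndependent.pair_iff.mp hind) (z ⬝ᵥ z) (-(s ⬝ᵥ z))
      (by rw [neg_smul, ← sub_eq_add_neg]; exact h)
    exact hc.ne' h2.1
  have hud : ((z ⬝ᵥ z) • s - (s ⬝ᵥ z) • z) ⬝ᵥ ((z ⬝ᵥ z) • s - (s ⬝ᵥ z) • z)
      = (z ⬝ᵥ z) * ((s ⬝ᵥ s) * (z ⬝ᵥ z) - (s ⬝ᵥ z) ^ 2) := by
    simp only [sub_dotProduct, dotProduct_sub, smul_dotProduct, dotProduct_smul,
      smul_eq_mul]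
    rw [dotProduct_comm z s]; ring
  have hD : 0 < (s ⬝ᵥ s) * (z ⬝ᵥ z) - (s ⬝ᵥ z) ^ 2 := by
    have h1 := dp_self_pos hu0
    rw [hud] at h1
    nlinarith
  -- nonzero facts
  have hτ' : τ ≠ 0 := hτ.ne'
  have hγ' : γ ≠ 0 := hγ.ne'
  have hb' : s ⬝ᵥ z ≠ 0 := hsz.ne'
  have ha' : s ⬝ᵥ s ≠ 0 := ha.ne'
  have hc' : z ⬝ᵥ z ≠ 0 := hc.ne'
  have hD' : (s ⬝ᵥ s) * (z ⬝ᵥ z) - (s ⬝ᵥ z) ^ 2 ≠ 0 := hD.ne'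
  -- φH explicit
  have hsub : φstar - φ ≠ 0 := sub_ne_zero.mpr hφ.ne
  have h2 : φH * (φstar - φ) = φstar * (1 - φ) := by
    rw [hφH]; field_simp
  have h3 : φstar * ((s ⬝ᵥ s) * (z ⬝ᵥ z) - (s ⬝ᵥ z) ^ 2) = -(s ⬝ᵥ z) ^ 2 := by
    rw [hφstar]; field_simp
  have hE : 0 < (s ⬝ᵥ z) ^ 2 + φ * ((s ⬝ᵥ s) * (z ⬝ᵥ z) - (s ⬝ᵥ z) ^ 2) := by
    have h4 : φstar * ((s ⬝ᵥ s) * (z ⬝ᵥ z) - (s ⬝ᵥ z) ^ 2)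
        < φ * ((s ⬝ᵥ s) * (z ⬝ᵥ z) - (s ⬝ᵥ z) ^ 2) :=
      mul_lt_mul_of_pos_right hφ hD
    rw [h3] at h4; linarith
  have hE' : (s ⬝ᵥ z) ^ 2 + φ * ((s ⬝ᵥ s) * (z ⬝ᵥ z) - (s ⬝ᵥ z) ^ 2) ≠ 0 := hE.ne'
  have key : φH * ((s ⬝ᵥ z) ^ 2 + φ * ((s ⬝ᵥ s) * (z ⬝ᵥ z) - (s ⬝ᵥ z) ^ 2))
      = (s ⬝ᵥ z) ^ 2 * (1 - φ) := by
    linear_combination (-((s ⬝ᵥ s) * (z ⬝ᵥ z) - (s ⬝ᵥ z) ^ 2)) * h2 + (φH - 1 + φ) * h3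
  have hφHval : φH = (s ⬝ᵥ z) ^ 2 * (1 - φ)
      / ((s ⬝ᵥ z) ^ 2 + φ * ((s ⬝ᵥ s) * (z ⬝ᵥ z) - (s ⬝ᵥ z) ^ 2)) :=
    (eq_div_iff hE').mpr key
  -- matrix expansion
  have hvv : vecMulVec v v = (s ⬝ᵥ s) • vecMulVec ((s ⬝ᵥ z)⁻¹ • z - (s ⬝ᵥ s)⁻¹ • s)
      ((s ⬝ᵥ z)⁻¹ • z - (s ⬝ᵥ s)⁻¹ • s) := by
    rw [hv, vmv_smul_left, vmv_smul_right, smul_smul, Real.mul_self_sqrt ha.le]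
  have hww : vecMulVec w w = (z ⬝ᵥ z) • vecMulVec ((s ⬝ᵥ z)⁻¹ • s - (z ⬝ᵥ z)⁻¹ • z)
      ((s ⬝ᵥ z)⁻¹ • s - (z ⬝ᵥ z)⁻¹ • z) := by
    rw [hw, vmv_smul_left, vmv_smul_right, smul_smul, Real.mul_self_sqrt hc.le]
  rw [hvv, hww]
  simp only [vmv_sub_left, vmv_sub_right, vmv_smul_left, vmv_smul_right,
    smul_sub, smul_add, smul_smul]
  simp only [Matrix.add_mul, Matrix.sub_mul, Matrix.mul_add, Matrix.mul_sub,
    smul_mul_assoc, mul_smul_comm, Matrix.one_mul, Matrix.mul_one,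
    vmv_mul_vmv, smul_smul]
  simp only [dotProduct_comm z s]
  generalize hEd : (s ⬝ᵥ z) ^ 2 + φ * ((s ⬝ᵥ s) * (z ⬝ᵥ z) - (s ⬝ᵥ z) ^ 2) = E at hφHval hE'
  match_scalars <;> (try simp only [hφHval]) <;> field_simp <;> (subst hEd) <;> ring
end
end

section
/- Let g : ℝⁿ → ℝ be differentiable with L-Lipschitz gradient. Let x, x′ ∈ ℝⁿ, s = x′ − x ≠ 0, z = (∇g(x′) − ∇g(x)) + νs with 0 ≤ ν ≤ ν̄, and suppose sᵀz ≥ ν̲‖s‖² with ν̲ > 0. Let v = √(sᵀs)·(z/(sᵀz) − s/(sᵀs)), φ* = −(sᵀz)² / ((sᵀs)(zᵀz) − (sᵀz)²) (when s and z are linearly independent; set the last term to zero when v = 0), and suppose φ satisfies φ̄₁φ* ≤ φ ≤ φ̄₂ with constants 0 ≤ φ̄₁ < 1 and φ̄₂ > 0, γ ∈ [γ̲, γ̄] with 0 < γ̲ ≤ γ̄, and τ ∈ [τ̲, τ̄] with 0 < τ̲ ≤ τ̄. Then there exist constants m > 0 and M > 0, depending only on L, ν̲, ν̄, φ̄₁,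 φ̄₂, γ̲, γ̄, τ̲, τ̄ (and not on x, x′), such that the matrix B = τI − τ ssᵀ/(sᵀs) + γ zzᵀ/(sᵀz) + τφ vvᵀ satisfies m‖u‖² ≤ uᵀBu ≤ M‖u‖² for all u ∈ ℝⁿ. -/
open Matrix Filter Topology RealInnerProductSpace

noncomputable section

/-- The vector `v = √(sᵀs)(z/(sᵀz) - s/(sᵀs))`. -/
def vvec {n : ℕ} (s z : Euc n) : Euc n :=
  Real.sqrt (⟪s, s⟫) • ((⟪s, z⟫)⁻¹ • z - (⟪s, s⟫)⁻¹ • s)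

/-- The critical parameter `φ* = -(sᵀz)²/((sᵀs)(zᵀz) - (sᵀz)²)`. -/
def phiStar {n : ℕ} (s z : Euc n) : ℝ :=
  -(⟪s, z⟫ : ℝ) ^ 2 / ((⟪s, s⟫ : ℝ) * (⟪z, z⟫ : ℝ) - (⟪s, z⟫ : ℝ) ^ 2)

/-- The memoryless modified spectral scaling Broyden family matrix
`B = τI - τssᵀ/(sᵀs) + γzzᵀ/(sᵀz) + τφvvᵀ`. -/
def Bmat {n : ℕ} (τ γ φ : ℝ) (s z : Euc n) : Matrix (Fin n) (Fin n) ℝ :=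
  τ • (1 : Matrix (Fin n) (Fin n) ℝ)
    - (τ / (⟪s, s⟫ : ℝ)) • vecMulVec (s : Fin n → ℝ) (s : Fin n → ℝ)
    + (γ / (⟪s, z⟫ : ℝ)) • vecMulVec (z : Fin n → ℝ) (z : Fin n → ℝ)
    + (τ * φ) • vecMulVec (vvec s z : Fin n → ℝ) (vvec s z : Fin n → ℝ)

lemma quadF_add {n : ℕ} (A B : Matrix (Fin n) (Fin n) ℝ) (u : Euc n) :
    quadF (A + B) u = quadF A u + quadF B u := by
  simp [quadF, inner_add_right]

lemma quadF_sub {n : ℕ} (A B : Matrix (Fin n) (Fin n) ℝ) (u : Euc n) :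
    quadF (A - B) u = quadF A u - quadF B u := by
  simp [quadF, inner_sub_right]

lemma quadF_smul {n : ℕ} (c : ℝ) (A : Matrix (Fin n) (Fin n) ℝ) (u : Euc n) :
    quadF (c • A) u = c * quadF A u := by
  simp [quadF, inner_smul_right]

lemma quadF_one {n : ℕ} (u : Euc n) : quadF 1 u = ⟪u, u⟫ := by
  simp [quadF, Matrix.toEuclideanLin_apply]

lemma quadF_vecMulVec {n : ℕ} (a u : Euc n) :
    quadF (vecMulVec (a : Fin n → ℝ) (a : Fin n → ℝ)) u = ⟪a, u⟫ ^ 2 := by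
  simp only [quadF, Matrix.toEuclideanLin_apply, PiLp.inner_apply, RCLike.inner_apply,
    starRingEnd_apply, star_trivial, PiLp.toLp_apply,
    Matrix.mulVec, Matrix.vecMulVec_apply, dotProduct, pow_two,
    Finset.sum_mul_sum, Finset.mul_sum]
  apply Finset.sum_congr rfl; intro i _
  rw [Finset.sum_mul, Finset.sum_mul]
  apply Finset.sum_congr rfl; intro j _
  ring

lemma quadF_Bmat {n : ℕ} (τ γ φ : ℝ) (s z u : Euc n) :
    quadF (Bmat τ γ φ s z) u
      = τ * ⟪u, u⟫ - τ / ⟪s, s⟫ * ⟪s, u⟫ ^ 2 + γ / ⟪s, z⟫ * ⟪z, u⟫ ^ 2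
        + (τ * φ) * ⟪vvec s z, u⟫ ^ 2 := by
  unfold Bmat
  rw [quadF_add, quadF_add, quadF_sub, quadF_smul, quadF_smul, quadF_smul, quadF_smul,
    quadF_one, quadF_vecMulVec, quadF_vecMulVec, quadF_vecMulVec]

lemma inner_vvec {n : ℕ} (s z u : Euc n) :
    (⟪vvec s z, u⟫ : ℝ)
      = Real.sqrt (⟪s, s⟫) * ((⟪s, z⟫ : ℝ)⁻¹ * ⟪z, u⟫ - (⟪s, s⟫ : ℝ)⁻¹ * ⟪s, u⟫) := by
  simp only [vvec, real_inner_smul_left, inner_sub_left]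

set_option maxHeartbeats 1000000 in
/-- uniform bounds `m‖u‖² ≤ uᵀBu ≤ M‖u‖²` for the memoryless modified
spectral scaling Broyden family matrices, with constants depending only on the data
`L, ν̲, ν̄, φ̄₁, φ̄₂, γ̲, γ̄, τ̲, τ̄` and not on the points `x, x'`. -/
theorem broyden_family_uniform_bounds
    {n : ℕ} (L νlo νhi φbar₁ φbar₂ γlo γhi τlo τhi : ℝ)
    (g : Euc n → ℝ) (g' : Euc n → Euc n)
    (hL : 0 ≤ L)
    (hg : ∀ y : Euc n, HasGradientAt g (g' y) y)
    (hLip : ∀ u v : Euc n, ‖g' u - g' v‖ ≤ L * ‖u - v‖)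
    (hνlo : 0 < νlo) (hνhi : 0 ≤ νhi)
    (hφ₁0 : 0 ≤ φbar₁) (hφ₁1 : φbar₁ < 1) (hφ₂ : 0 < φbar₂)
    (hγlo : 0 < γlo) (hγ : γlo ≤ γhi) (hτlo : 0 < τlo) (hτ : τlo ≤ τhi) :
    ∃ m M : ℝ, 0 < m ∧ 0 < M ∧
      ∀ (x x' : Euc n) (ν γ τ φ : ℝ) (s z : Euc n),
        s = x' - x → s ≠ 0 →
        z = (g' x' - g' x) + ν • s →
        0 ≤ ν → ν ≤ νhi →
        νlo * ‖s‖ ^ 2 ≤ ⟪s, z⟫ →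
        γlo ≤ γ → γ ≤ γhi → τlo ≤ τ → τ ≤ τhi →
        (LinearIndependent ℝ ![s, z] → φbar₁ * phiStar s z ≤ φ) → φ ≤ φbar₂ →
        ∀ u : Euc n,
          m * ‖u‖ ^ 2 ≤ quadF (Bmat τ γ φ s z) u ∧
          quadF (Bmat τ γ φ s z) u ≤ M * ‖u‖ ^ 2 := by
  have hγhi : 0 < γhi := lt_of_lt_of_le hγlo hγ
  have hτhi : 0 < τhi := lt_of_lt_of_le hτlo hτ
  have h1φ : 0 < 1 - φbar₁ := by linarith
  set C := L + νhi + νlo with hCdef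
  have hCpos : 0 < C := by simp only [hCdef]; linarith
  set c₁ := τlo * (1 - φbar₁) / 2 with hc₁def
  have hc₁pos : 0 < c₁ := div_pos (mul_pos hτlo h1φ) two_pos
  set ε := c₁ * νlo / (γhi * C ^ 2) with hεdef
  have hεpos : 0 < ε := div_pos (mul_pos hc₁pos hνlo) (by positivity)
  set cc := 1 + ε with hccdef
  have hccpos : 0 < cc := by simp only [hccdef]; linarith
  set c₂ := γlo * νlo * ε / cc with hc₂def
  have hc₂pos : 0 < c₂ := div_pos (mul_pos (mul_pos hγlo hνlo) hεpos) hccpos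
  have hεid : γhi * ε * C ^ 2 = c₁ * νlo := by
    rw [hεdef]; field_simp
  have hc₂id : cc * c₂ = γlo * νlo * ε := by
    rw [hc₂def]; field_simp
  set Mv := τhi + γhi * C ^ 2 / νlo + τhi * φbar₂ * C ^ 2 / νlo ^ 2 with hMvdef
  have hMvpos : 0 < Mv := by
    have h1 : 0 ≤ γhi * C ^ 2 / νlo := div_nonneg (mul_nonneg hγhi.le (sq_nonneg C)) hνlo.le
    have h2 : 0 ≤ τhi * φbar₂ * C ^ 2 / νlo ^ 2 :=
      div_nonneg (mul_nonneg (mul_nonneg hτhi.le hφ₂.le) (sq_nonneg C)) (sq_nonneg νlo)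
    simp only [hMvdef]; linarith
  refine ⟨min c₁ c₂, Mv, lt_min hc₁pos hc₂pos, hMvpos, ?_⟩
  intro x x' ν γ τ φ s z hs hs0 hz hν0 hν1 hsz hγ1 hγ2 hτ1 hτ2 hφ1 hφ2 u
  have hγpos : 0 < γ := lt_of_lt_of_le hγlo hγ1
  have hτpos : 0 < τ := lt_of_lt_of_le hτlo hτ1
  -- norm facts
  have hsn : 0 < ‖s‖ := norm_pos_iff.mpr hs0
  have hznorm : ‖z‖ ≤ C * ‖s‖ := by
    have h1 : ‖z‖ ≤ ‖g' x' - g' x‖ + ‖ν • s‖ := by rw [hz]; exact norm_add_le _ _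
    have h2 : ‖g' x' - g' x‖ ≤ L * ‖s‖ := by
      have h := hLip x' x
      rw [← hs] at h
      exact h
    have h3 : ‖ν • s‖ = ν * ‖s‖ := by
      rw [norm_smul, Real.norm_eq_abs, abs_of_nonneg hν0]
    have h4 : ν * ‖s‖ ≤ νhi * ‖s‖ := mul_le_mul_of_nonneg_right hν1 hsn.le
    have h5 : 0 ≤ νlo * ‖s‖ := mul_nonneg hνlo.le hsn.le
    simp only [hCdef]
    linarith
  -- raw scalar facts
  have hvv := inner_vvec s z u
  have hQform := quadF_Bmat τ γ φ s z u
  have hCSsu := real_inner_mul_inner_self_le s u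
  have hCSzu := real_inner_mul_inner_self_le z u
  have hCSsz := real_inner_mul_inner_self_le s z
  have hproj0 := real_inner_mul_inner_self_le
    ((⟪s, s⟫ : ℝ) • z - (⟪s, z⟫ : ℝ) • s) ((⟪s, s⟫ : ℝ) • u - (⟪s, u⟫ : ℝ) • s)
  simp only [inner_sub_left, inner_sub_right, real_inner_smul_left, real_inner_smul_right] at hproj0
  rw [real_inner_comm s z, real_inner_comm s u] at hproj0
  have hSpos : (0 : ℝ) < ⟪s, s⟫ := by
    rw [real_inner_self_eq_norm_sq]; exact pow_pos hsn 2
  have hZnn : (0 : ℝ) ≤ ⟪z, z⟫ := real_inner_self_nonneg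
  have hUnn : (0 : ℝ) ≤ ⟪u, u⟫ := real_inner_self_nonneg
  have hYraw : νlo * ⟪s, s⟫ ≤ ⟪s, z⟫ := by
    rw [real_inner_self_eq_norm_sq]; exact hsz
  have hZraw : (⟪z, z⟫ : ℝ) ≤ C ^ 2 * ⟪s, s⟫ := by
    rw [real_inner_self_eq_norm_sq, real_inner_self_eq_norm_sq]
    have := mul_self_le_mul_self (norm_nonneg z) hznorm
    linarith [this]
  rw [← real_inner_self_eq_norm_sq u]
  -- abbreviate scalars
  set S := (⟪s, s⟫ : ℝ) with hSdef
  set Y := (⟪s, z⟫ : ℝ) with hYdef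
  set Z := (⟪z, z⟫ : ℝ) with hZdef
  set a := (⟪s, u⟫ : ℝ) with hadef
  set b := (⟪z, u⟫ : ℝ) with hbdef
  set U := (⟪u, u⟫ : ℝ) with hUdef
  have hYpos : 0 < Y := lt_of_lt_of_le (mul_pos hνlo hSpos) hYraw
  have hCSsu' : a ^ 2 ≤ S * U := by linarith [hCSsu]
  have hCSzu' : b ^ 2 ≤ Z * U := by linarith [hCSzu]
  have hDnn : 0 ≤ S * Z - Y ^ 2 := by linarith [hCSsz]
  have hW : 0 ≤ S * U - a ^ 2 := by linarith
  have hproj : (b * S - a * Y) ^ 2 ≤ (S * Z - Y ^ 2) * (S * U - a ^ 2) := by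
    have h9 : S ^ 2 * 0 ≤ S ^ 2 * ((S * Z - Y ^ 2) * (S * U - a ^ 2) - (b * S - a * Y) ^ 2) := by
      linarith [hproj0]
    have h10 := le_of_mul_le_mul_left h9 (by positivity : (0 : ℝ) < S ^ 2)
    linarith [h10]
  have hDle : S * Z - Y ^ 2 ≤ C ^ 2 * S ^ 2 := by
    have h1 : Z * S ≤ (C ^ 2 * S) * S := mul_le_mul_of_nonneg_right hZraw hSpos.le
    linarith [h1, sq_nonneg Y]
  -- v-term as scalars
  have hv2sq : (⟪vvec s z, u⟫ : ℝ) ^ 2 = (b * S - a * Y) ^ 2 / (S * Y ^ 2) := by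
    rw [hvv, mul_pow, Real.sq_sqrt hSpos.le]
    field_simp
  have hQscaled : quadF (Bmat τ γ φ s z) u * (S ^ 2 * Y ^ 2)
      = τ * (S * U - a ^ 2) * S * Y ^ 2 + γ * b ^ 2 * S ^ 2 * Y
        + τ * φ * (b * S - a * Y) ^ 2 * S := by
    rw [hQform, hv2sq]
    field_simp
  have hpos2 : (0 : ℝ) < S ^ 2 * Y ^ 2 := by positivity
  -- linear independence from t ≠ 0
  have hli : (b * S - a * Y) ≠ 0 → LinearIndependent ℝ ![s, z] := by
    intro ht
    refine (LinearIndependent.pair_iff' hs0).mpr fun α hα => ht ?_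
    have hb' : b = α * a := by
      rw [hbdef, ← hα, real_inner_smul_left, ← hadef]
    have hY' : Y = α * S := by
      rw [hYdef, ← hα, real_inner_smul_right, ← hSdef]
    rw [hb', hY']; ring
  have hps : phiStar s z = -Y ^ 2 / (S * Z - Y ^ 2) := by
    simp only [phiStar]
    rfl
  -- the φ-term lower bound
  have hP2 : -(τ * φbar₁) * (S * U - a ^ 2) * Y ^ 2 * S ≤ τ * φ * (b * S - a * Y) ^ 2 * S := by
    rcases eq_or_ne (b * S - a * Y) 0 with h0 | h0
    · rw [h0]
      have hnn : 0 ≤ τ * φbar₁ * (S * U - a ^ 2) * Y ^ 2 * S :=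
        mul_nonneg (mul_nonneg (mul_nonneg (mul_nonneg hτpos.le hφ₁0) hW) (sq_nonneg Y)) hSpos.le
      linarith [hnn]
    · have ht2pos : 0 < (b * S - a * Y) ^ 2 := by positivity
      have hDpos : 0 < S * Z - Y ^ 2 := by
        rcases lt_or_ge 0 (S * Z - Y ^ 2) with h | h
        · exact h
        · have hnp : (S * Z - Y ^ 2) * (S * U - a ^ 2) ≤ 0 :=
            mul_nonpos_iff.mpr (Or.inr ⟨h, hW⟩)
          linarith [hproj, ht2pos]
      have hφlo := hφ1 (hli h0)
      rw [hps] at hφlo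
      have hφD : -(φbar₁ * Y ^ 2) ≤ φ * (S * Z - Y ^ 2) := by
        have h1 : φbar₁ * (-Y ^ 2 / (S * Z - Y ^ 2)) * (S * Z - Y ^ 2) = -(φbar₁ * Y ^ 2) := by
          field_simp
        have h2 := mul_le_mul_of_nonneg_right hφlo hDpos.le
        linarith [h1, h2]
      rcases le_or_gt 0 φ with hφ0 | hφ0
      · have A : 0 ≤ τ * φ * (b * S - a * Y) ^ 2 * S :=
          mul_nonneg (mul_nonneg (mul_nonneg hτpos.le hφ0) ht2pos.le) hSpos.le
        have B : 0 ≤ τ * φbar₁ * (S * U - a ^ 2) * Y ^ 2 * S :=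
          mul_nonneg (mul_nonneg (mul_nonneg (mul_nonneg hτpos.le hφ₁0) hW) (sq_nonneg Y)) hSpos.le
        linarith
      · have h2 : φ * ((S * Z - Y ^ 2) * (S * U - a ^ 2)) ≤ φ * (b * S - a * Y) ^ 2 :=
          mul_le_mul_of_nonpos_left hproj hφ0.le
        have h3 : -(φbar₁ * Y ^ 2) * (S * U - a ^ 2) ≤ φ * (S * Z - Y ^ 2) * (S * U - a ^ 2) :=
          mul_le_mul_of_nonneg_right hφD hW
        have h5 : -(φbar₁ * Y ^ 2) * (S * U - a ^ 2) ≤ φ * (b * S - a * Y) ^ 2 := by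
          linarith
        have h6 := mul_le_mul_of_nonneg_left h5 (mul_nonneg hτpos.le hSpos.le)
        linarith [h6]
  constructor
  · -- LOWER BOUND
    have hmain : min c₁ c₂ * U * (S ^ 2 * Y ^ 2) ≤ quadF (Bmat τ γ φ s z) u * (S ^ 2 * Y ^ 2) := by
      rw [hQscaled]
      have key : cc * (min c₁ c₂ * U * (S ^ 2 * Y ^ 2))
          ≤ cc * (τ * (S * U - a ^ 2) * S * Y ^ 2 + γ * b ^ 2 * S ^ 2 * Y
              + τ * φ * (b * S - a * Y) ^ 2 * S) := by
        have hP1 : 2 * c₁ * (S * U - a ^ 2) * S * Y ^ 2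
            ≤ τ * (1 - φbar₁) * (S * U - a ^ 2) * S * Y ^ 2 := by
          have hint : 0 ≤ ((τ - τlo) * (1 - φbar₁)) * ((S * U - a ^ 2) * (S * Y ^ 2)) :=
            mul_nonneg (mul_nonneg (sub_nonneg.2 hτ1) h1φ.le)
              (mul_nonneg hW (mul_nonneg hSpos.le (sq_nonneg Y)))
          rw [hc₁def]
          linarith [hint]
        have hA : ε * (a * Y) ^ 2 - cc * ε * (b * S - a * Y) ^ 2
            ≤ cc * (a * Y + (b * S - a * Y)) ^ 2 := by
          have hid : cc * (a * Y + (b * S - a * Y)) ^ 2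
              - (ε * (a * Y) ^ 2 - cc * ε * (b * S - a * Y) ^ 2)
              = (a * Y + cc * (b * S - a * Y)) ^ 2 := by
            rw [hccdef]; ring
          linarith [sq_nonneg (a * Y + cc * (b * S - a * Y)), hid]
        have q2 : (γ * Y) * (ε * (a * Y) ^ 2 - cc * ε * (b * S - a * Y) ^ 2)
            ≤ (γ * Y) * (cc * (a * Y + (b * S - a * Y)) ^ 2) :=
          mul_le_mul_of_nonneg_left hA (mul_pos hγpos hYpos).le
        have hgy : γlo * (νlo * S) ≤ γ * Y := by
          have i1 : γlo * (νlo * S) ≤ γlo * Y := by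
            have := mul_le_mul_of_nonneg_left hYraw hγlo.le
            linarith [this]
          have i2 : γlo * Y ≤ γ * Y := mul_le_mul_of_nonneg_right hγ1 hYpos.le
          linarith
        have q3' : cc * c₂ * a ^ 2 * S * Y ^ 2 ≤ (γ * Y) * (ε * (a * Y) ^ 2) := by
          have hint : 0 ≤ (ε * a ^ 2 * Y ^ 2) * (γ * Y - γlo * (νlo * S)) :=
            mul_nonneg (mul_nonneg (mul_nonneg hεpos.le (sq_nonneg a)) (sq_nonneg Y))
              (sub_nonneg.2 hgy)
          have heq : cc * c₂ * a ^ 2 * S * Y ^ 2 = ε * (γlo * νlo) * a ^ 2 * S * Y ^ 2 := by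
            linear_combination (a ^ 2 * S * Y ^ 2) * hc₂id
          linarith [hint, heq]
        have ht2 : (b * S - a * Y) ^ 2 ≤ C ^ 2 * S ^ 2 * (S * U - a ^ 2) := by
          have := mul_le_mul_of_nonneg_right hDle hW
          linarith [hproj, this]
        have q4 : (γ * Y) * (cc * ε * (b * S - a * Y) ^ 2)
            ≤ cc * c₁ * (S * U - a ^ 2) * S * Y ^ 2 := by
          have k1 : (γ * Y) * (cc * ε * (b * S - a * Y) ^ 2)
              ≤ (γ * Y) * (cc * ε * (C ^ 2 * S ^ 2 * (S * U - a ^ 2))) := by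
            apply mul_le_mul_of_nonneg_left _ (mul_pos hγpos hYpos).le
            exact mul_le_mul_of_nonneg_left ht2 (mul_pos hccpos hεpos).le
          have hXnn : 0 ≤ Y * (cc * ε * (C ^ 2 * S ^ 2 * (S * U - a ^ 2))) :=
            mul_nonneg hYpos.le (mul_nonneg (mul_pos hccpos hεpos).le
              (mul_nonneg (by positivity) hW))
          have k2 := mul_le_mul_of_nonneg_right hγ2 hXnn
          have k3 : γhi * (Y * (cc * ε * (C ^ 2 * S ^ 2 * (S * U - a ^ 2))))
              = cc * (c₁ * νlo) * S ^ 2 * (S * U - a ^ 2) * Y := by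
            linear_combination (cc * Y * S ^ 2 * (S * U - a ^ 2)) * hεid
          have k4 : cc * (c₁ * νlo) * S ^ 2 * (S * U - a ^ 2) * Y
              ≤ cc * c₁ * (S * U - a ^ 2) * S * Y ^ 2 := by
            have hint : 0 ≤ (cc * c₁ * S * (S * U - a ^ 2)) * (Y * (Y - νlo * S)) :=
              mul_nonneg (mul_nonneg (mul_nonneg (mul_nonneg hccpos.le hc₁pos.le) hSpos.le) hW)
                (mul_nonneg hYpos.le (sub_nonneg.2 hYraw))
            linarith [hint]
          linarith [k1, k2, k3, k4]
        have hP3 : cc * c₂ * a ^ 2 * S * Y ^ 2 - cc * c₁ * (S * U - a ^ 2) * S * Y ^ 2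
            ≤ cc * (γ * b ^ 2 * S ^ 2 * Y) := by
          linarith [q2, q3', q4]
        have hP1' := mul_le_mul_of_nonneg_left hP1 hccpos.le
        have hP2' := mul_le_mul_of_nonneg_left hP2 hccpos.le
        have hA2 : 0 ≤ cc * (c₁ - min c₁ c₂) * (S * U - a ^ 2) * S * Y ^ 2 :=
          mul_nonneg (mul_nonneg (mul_nonneg (mul_nonneg hccpos.le
            (sub_nonneg.2 (min_le_left c₁ c₂))) hW) hSpos.le) (sq_nonneg Y)
        have hB2 : 0 ≤ cc * (c₂ - min c₁ c₂) * a ^ 2 * S * Y ^ 2 :=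
          mul_nonneg (mul_nonneg (mul_nonneg (mul_nonneg hccpos.le
            (sub_nonneg.2 (min_le_right c₁ c₂))) (sq_nonneg a)) hSpos.le) (sq_nonneg Y)
        linarith [hP1', hP2', hP3, hA2, hB2]
      exact le_of_mul_le_mul_left key hccpos
    exact le_of_mul_le_mul_right hmain hpos2
  · -- UPPER BOUND
    have hmain : quadF (Bmat τ γ φ s z) u * (S ^ 2 * Y ^ 2) ≤ Mv * U * (S ^ 2 * Y ^ 2) := by
      rw [hQscaled]
      have u1 : τ * (S * U - a ^ 2) * S * Y ^ 2 ≤ τhi * (U * S ^ 2 * Y ^ 2) := by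
        have i1 : 0 ≤ ((τhi - τ) * (S * U - a ^ 2)) * (S * Y ^ 2) :=
          mul_nonneg (mul_nonneg (sub_nonneg.2 hτ2) hW) (mul_nonneg hSpos.le (sq_nonneg Y))
        have i2 : 0 ≤ (τhi * a ^ 2) * (S * Y ^ 2) :=
          mul_nonneg (mul_nonneg hτhi.le (sq_nonneg a)) (mul_nonneg hSpos.le (sq_nonneg Y))
        linarith [i1, i2]
      have hbZ : b ^ 2 ≤ C ^ 2 * S * U := by
        have := mul_nonneg (sub_nonneg.2 hZraw) hUnn
        linarith [hCSzu', this]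
      have u2 : γ * b ^ 2 * S ^ 2 * Y ≤ γhi * C ^ 2 / νlo * (U * S ^ 2 * Y ^ 2) := by
        rw [div_mul_eq_mul_div, le_div_iff₀ hνlo]
        have m1 : γ * b ^ 2 ≤ γhi * (C ^ 2 * S * U) :=
          mul_le_mul hγ2 hbZ (sq_nonneg b) hγhi.le
        have h4 : (0 : ℝ) ≤ S ^ 2 * Y * νlo := by positivity
        have h3 : 0 ≤ (γhi * C ^ 2 * U * S ^ 2) * (Y * (Y - νlo * S)) := by
          apply mul_nonneg
          · exact mul_nonneg (mul_nonneg (mul_nonneg hγhi.le (sq_nonneg C)) hUnn) (sq_nonneg S)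
          · exact mul_nonneg hYpos.le (sub_nonneg.2 hYraw)
        linarith [mul_le_mul_of_nonneg_right m1 h4, h3]
      have u3 : τ * φ * (b * S - a * Y) ^ 2 * S
          ≤ τhi * φbar₂ * C ^ 2 / νlo ^ 2 * (U * S ^ 2 * Y ^ 2) := by
        rw [div_mul_eq_mul_div, le_div_iff₀ (by positivity : (0 : ℝ) < νlo ^ 2)]
        have hcoef : τ * φ ≤ τhi * φbar₂ := by
          rcases le_or_gt 0 φ with h | h
          · have j1 : τ * φ ≤ τhi * φ := mul_le_mul_of_nonneg_right hτ2 h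
            have j2 : τhi * φ ≤ τhi * φbar₂ := mul_le_mul_of_nonneg_left hφ2 hτhi.le
            linarith
          · have j1 : τ * φ < 0 := mul_neg_of_pos_of_neg hτpos h
            have j2 : 0 < τhi * φbar₂ := mul_pos hτhi hφ₂
            linarith
        have hT : (b * S - a * Y) ^ 2 ≤ C ^ 2 * S ^ 3 * U := by
          have i1 := mul_le_mul_of_nonneg_right hDle hW
          have i2 : 0 ≤ C ^ 2 * S ^ 2 * a ^ 2 := by positivity
          linarith [hproj, i1, i2]
        have m2 : τ * φ * ((b * S - a * Y) ^ 2 * S) ≤ τhi * φbar₂ * ((b * S - a * Y) ^ 2 * S) :=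
          mul_le_mul_of_nonneg_right hcoef (mul_nonneg (sq_nonneg _) hSpos.le)
        have m3 : (b * S - a * Y) ^ 2 * S ≤ C ^ 2 * S ^ 3 * U * S :=
          mul_le_mul_of_nonneg_right hT hSpos.le
        have m3' : τhi * φbar₂ * ((b * S - a * Y) ^ 2 * S) ≤ τhi * φbar₂ * (C ^ 2 * S ^ 3 * U * S) :=
          mul_le_mul_of_nonneg_left m3 (mul_nonneg hτhi.le hφ₂.le)
        have hYsq : νlo ^ 2 * S ^ 2 ≤ Y ^ 2 := by
          have := mul_self_le_mul_self (mul_pos hνlo hSpos).le hYraw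
          linarith [this]
        have m4 : τhi * φbar₂ * (C ^ 2 * S ^ 3 * U * S) * νlo ^ 2
            ≤ τhi * φbar₂ * C ^ 2 * (U * S ^ 2 * Y ^ 2) := by
          have hint : 0 ≤ (τhi * φbar₂ * C ^ 2 * U * S ^ 2) * (Y ^ 2 - νlo ^ 2 * S ^ 2) :=
            mul_nonneg (mul_nonneg (mul_nonneg (mul_nonneg (mul_nonneg hτhi.le hφ₂.le)
              (sq_nonneg C)) hUnn) (sq_nonneg S)) (sub_nonneg.2 hYsq)
          linarith [hint]
        linarith [mul_le_mul_of_nonneg_right m2 (sq_nonneg νlo),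
          mul_le_mul_of_nonneg_right m3' (sq_nonneg νlo), m4]
      rw [hMvdef]
      linarith [u1, u2, u3]
    exact le_of_mul_le_mul_right hmain hpos2
end
end
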